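/- arXiv:2507.04731 — 3 statements merged into one kernel-verified Lean document; each statement's English description precedes it below -/
import Mathlib

section
/- For all integers n, r, m with r ≥ 1 and 1 ≤ m ≤ n - r, there exist invertible matrices A_1,…,A_m ∈ ℝ^{n×n} and matrices B_1,…,B_m ∈ ℝ^{n×r} each of rank r such that the associated switched linear control system is controllable, there exists a controllable switching sequence of length n - r + 1 + m(m-1)/2, and no controllable switching sequence has length strictly smaller than n - r + 1 + m(m-1)/2. -/
/-- Reachable space of a discrete-time switched linear control system
`x_k = A_{i_k} x_{k-1} + B_{i_k} u_k` along the switching sequence `π`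
(the head of the list is the first applied mode):
`R(ε) = {0}` and `R(π' i) = A_i R(π') + Im(B_i)`. -/
def reach {n m : ℕ} (A : Fin m → Matrix (Fin n) (Fin n) ℝ) {q : Fin m → ℕ}
    (B : ∀ i, Matrix (Fin n) (Fin (q i)) ℝ) (π : List (Fin m)) :
    Submodule ℝ (Fin n → ℝ) :=
  π.foldl (fun S i =>
    Submodule.map (Matrix.mulVecLin (A i)) S ⊔ LinearMap.range (Matrix.mulVecLin (B i))) ⊥

/-- The subspaces `V_k`: `V_0 = {0}`, `V_1 = Σ_i Im B_i`, and
`V_{k+1} = V_k + Σ_i A_i V_k` for `k ≥ 1`. -/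
def Vsp {n m : ℕ} (A : Fin m → Matrix (Fin n) (Fin n) ℝ) {q : Fin m → ℕ}
    (B : ∀ i, Matrix (Fin n) (Fin (q i)) ℝ) : ℕ → Submodule ℝ (Fin n → ℝ)
  | 0 => ⊥
  | 1 => ⨆ i, LinearMap.range (Matrix.mulVecLin (B i))
  | (k + 2) => Vsp A B (k + 1) ⊔
      ⨆ i, Submodule.map (Matrix.mulVecLin (A i)) (Vsp A B (k + 1))


open Matrix Finset

/-- Coordinate subspace: functions supported on `S`. -/
def coordSub {n : ℕ} (S : Finset (Fin n)) : Submodule ℝ (Fin n → ℝ) where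
  carrier := {f | ∀ x, x ∉ S → f x = 0}
  add_mem' := by intro a b ha hb x hx; simp [ha x hx, hb x hx]
  zero_mem' := by intro x _; rfl
  smul_mem' := by intro c f hf x hx; simp [hf x hx]

lemma mem_coordSub {n : ℕ} {S : Finset (Fin n)} {f : Fin n → ℝ} :
    f ∈ coordSub S ↔ ∀ x, x ∉ S → f x = 0 := Iff.rfl

lemma coordSub_empty {n : ℕ} : coordSub (∅ : Finset (Fin n)) = ⊥ := by
  ext f
  simp only [mem_coordSub, Submodule.mem_bot]
  constructor
  · intro h; funext x; exact h x (by simp)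
  · intro h x _; simp [h]

lemma coordSub_univ {n : ℕ} : coordSub (Finset.univ : Finset (Fin n)) = ⊤ := by
  ext f; simp [mem_coordSub]

lemma coordSub_mono {n : ℕ} {S S' : Finset (Fin n)} (h : S ⊆ S') :
    coordSub S ≤ coordSub S' := by
  intro f hf x hx
  exact hf x (fun hxS => hx (h hxS))

lemma coordSub_sup {n : ℕ} (S S' : Finset (Fin n)) :
    coordSub S ⊔ coordSub S' = coordSub (S ∪ S') := by
  apply le_antisymm
  · exact sup_le (coordSub_mono (Finset.subset_union_left))
      (coordSub_mono (Finset.subset_union_right))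
  · intro f hf
    rw [Submodule.mem_sup]
    refine ⟨fun x => if x ∈ S then f x else 0, ?_, fun x => if x ∈ S then 0 else f x, ?_, ?_⟩
    · intro x hx; simp [hx]
    · intro x hx
      by_cases hxS : x ∈ S
      · simp [hxS]
      · simp [hxS, hf x (by simp [hxS, hx])]
    · funext x; by_cases hxS : x ∈ S <;> simp [hxS]

lemma coordSub_eq_top_iff {n : ℕ} {S : Finset (Fin n)} :
    coordSub S = ⊤ ↔ S = Finset.univ := by
  constructor
  · intro h
    by_contra hS
    have : ∃ x, x ∉ S := by
      by_contra hall
      push_neg at hall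
      exact hS (Finset.eq_univ_iff_forall.mpr hall)
    obtain ⟨x, hx⟩ := this
    have hmem : (Pi.single x 1 : Fin n → ℝ) ∈ coordSub S := by rw [h]; trivial
    have := hmem x hx
    simp at this
  · rintro rfl; exact coordSub_univ

/-- Permutation matrix. -/
def pmat {n : ℕ} (σ : Equiv.Perm (Fin n)) : Matrix (Fin n) (Fin n) ℝ :=
  Matrix.of fun x y => if x = σ y then 1 else 0

lemma pmat_mulVec {n : ℕ} (σ : Equiv.Perm (Fin n)) (f : Fin n → ℝ) :
    (pmat σ).mulVec f = fun x => f (σ.symm x) := by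
  funext x
  simp only [pmat, Matrix.mulVec, dotProduct, Matrix.of_apply]
  rw [Finset.sum_congr rfl (g := fun y => if y = σ.symm x then f y else 0)]
  · simp
  · intro y _
    by_cases h : y = σ.symm x
    · simp [h, Equiv.apply_symm_apply]
    · have h2 : ¬ x = σ y := by
        intro hc; exact h (by simp [hc])
      simp [h, h2]

lemma pmat_mul {n : ℕ} (σ τ : Equiv.Perm (Fin n)) :
    pmat σ * pmat τ = pmat (σ * τ) := by
  ext x z
  simp only [pmat, Matrix.mul_apply, Matrix.of_apply]
  rw [Finset.sum_congr rfl (g := fun y => if y = τ z then (if x = σ y then (1:ℝ) else 0) else 0)]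
  · by_cases h : x = σ (τ z) <;> simp [h, Equiv.Perm.mul_apply]
  · intro y _
    by_cases h : y = τ z
    · simp [h]
    · have : ¬ y = τ z := h
      simp [this, eq_comm, h]

lemma pmat_one {n : ℕ} : pmat (1 : Equiv.Perm (Fin n)) = 1 := by
  ext x y
  simp [pmat, Matrix.one_apply]
  split_ifs <;> simp_all

lemma isUnit_pmat {n : ℕ} (σ : Equiv.Perm (Fin n)) : IsUnit (pmat σ) := by
  refine ⟨⟨pmat σ, pmat σ⁻¹, ?_, ?_⟩, rfl⟩
  · rw [pmat_mul, mul_inv_cancel, pmat_one]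
  · rw [pmat_mul, inv_mul_cancel, pmat_one]

lemma pmat_map_coordSub {n : ℕ} (σ : Equiv.Perm (Fin n)) (S : Finset (Fin n)) :
    Submodule.map (pmat σ).mulVecLin (coordSub S) = coordSub (S.image σ) := by
  apply le_antisymm
  · rintro g ⟨f, hf, rfl⟩
    simp only [Matrix.mulVecLin_apply, pmat_mulVec]
    intro x hx
    apply hf
    intro hmem
    exact hx (Finset.mem_image.mpr ⟨σ.symm x, hmem, by simp⟩)
  · intro g hg
    refine ⟨fun y => g (σ y), ?_, ?_⟩
    · intro y hy
      apply hg
      intro hmem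
      obtain ⟨z, hz, hzz⟩ := Finset.mem_image.mp hmem
      exact hy (by rwa [σ.injective hzz] at hz)
    · simp [Matrix.mulVecLin_apply, pmat_mulVec]

/-- Matrix with columns the standard basis vectors `e_{emb j}`. -/
def bmat {n r : ℕ} (emb : Fin r → Fin n) : Matrix (Fin n) (Fin r) ℝ :=
  Matrix.of fun x j => if x = emb j then 1 else 0

lemma bmat_mulVec {n r : ℕ} (emb : Fin r → Fin n) (hemb : Function.Injective emb)
    (u : Fin r → ℝ) (j : Fin r) : (bmat emb).mulVec u (emb j) = u j := by
  simp only [bmat, Matrix.mulVec, dotProduct, Matrix.of_apply]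
  rw [Finset.sum_congr rfl (g := fun j' => if j' = j then u j' else 0)]
  · simp
  · intro j' _
    by_cases h : j' = j
    · simp [h]
    · have : ¬ emb j = emb j' := fun hc => h (hemb hc.symm)
      simp [h, this]

lemma bmat_mulVec_notMem {n r : ℕ} (emb : Fin r → Fin n)
    (u : Fin r → ℝ) (x : Fin n) (hx : ∀ j, x ≠ emb j) : (bmat emb).mulVec u x = 0 := by
  simp only [bmat, Matrix.mulVec, dotProduct, Matrix.of_apply]
  apply Finset.sum_eq_zero
  intro j _
  simp [hx j]

lemma bmat_range {n r : ℕ} (emb : Fin r → Fin n) (hemb : Function.Injective emb) :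
    LinearMap.range (bmat emb).mulVecLin = coordSub (Finset.image emb Finset.univ) := by
  apply le_antisymm
  · rintro g ⟨u, rfl⟩
    intro x hx
    apply bmat_mulVec_notMem
    intro j hj
    exact hx (Finset.mem_image.mpr ⟨j, Finset.mem_univ j, hj.symm⟩)
  · intro g hg
    refine ⟨fun j => g (emb j), ?_⟩
    funext x
    by_cases hx : ∃ j, x = emb j
    · obtain ⟨j, rfl⟩ := hx
      simpa using bmat_mulVec emb hemb _ j
    · push_neg at hx
      rw [Matrix.mulVecLin_apply, bmat_mulVec_notMem emb _ x hx]
      exact (hg x (fun hmem => by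
        obtain ⟨j, _, hj⟩ := Finset.mem_image.mp hmem
        exact hx j hj.symm)).symm

lemma bmat_rank {n r : ℕ} (emb : Fin r → Fin n) (hemb : Function.Injective emb) :
    (bmat emb).rank = r := by
  have hinj : Function.Injective (bmat emb).mulVecLin := by
    intro u v huv
    funext j
    have := congrFun huv (emb j)
    simpa [Matrix.mulVecLin_apply, bmat_mulVec emb hemb] using this
  rw [Matrix.rank, LinearMap.finrank_range_of_inj hinj]
  simp

open Finset

/-- forward rotation on `{0,…,T}`, identity elsewhere -/
def rotF (n T : ℕ) (hT : T < n) (x : Fin n) : Fin n :=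
  ⟨if x.val < T then x.val + 1 else if x.val = T then 0 else x.val, by
    have := x.isLt
    split
    · omega
    · split <;> omega⟩

def rotI (n T : ℕ) (hT : T < n) (x : Fin n) : Fin n :=
  ⟨if x.val = 0 then T else if x.val ≤ T then x.val - 1 else x.val, by
    have := x.isLt
    split
    · omega
    · split <;> omega⟩

lemma rotF_val (n T : ℕ) (hT : T < n) (x : Fin n) :
    (rotF n T hT x).val = if x.val < T then x.val + 1 else if x.val = T then 0 else x.val := rfl

lemma rotI_val (n T : ℕ) (hT : T < n) (x : Fin n) :
    (rotI n T hT x).val = if x.val = 0 then T else if x.val ≤ T then x.val - 1 else x.val := rfl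

def rot (n T : ℕ) (hT : T < n) : Equiv.Perm (Fin n) where
  toFun := rotF n T hT
  invFun := rotI n T hT
  left_inv := by
    intro x
    have := x.isLt
    apply Fin.ext
    rw [rotI_val, rotF_val]
    split_ifs <;> first | omega | contradiction
  right_inv := by
    intro x
    have := x.isLt
    apply Fin.ext
    rw [rotF_val, rotI_val]
    split_ifs <;> first | omega | contradiction

lemma rot_val (n T : ℕ) (hT : T < n) (x : Fin n) :
    (rot n T hT x).val = if x.val < T then x.val + 1 else if x.val = T then 0 else x.val := by
  simp [rot, rotF, Equiv.coe_fn_mk]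

/-- value of the first swapped point of mode `i` -/
def avl (T i : ℕ) : ℕ := if i = 0 then 1 else T + i

/-- the mode permutations: modes `0..m-2` are transpositions along the chain,
mode `m-1` is the rotation. -/
def modePerm (n m T : ℕ) (h1T : 1 ≤ T) (hch : T + m ≤ n) (i : Fin m) : Equiv.Perm (Fin n) :=
  if _ : i.val + 1 = m then rot n T (by omega)
  else Equiv.swap
    ⟨avl T i.val, by have := i.isLt; unfold avl; split <;> omega⟩
    ⟨T + i.val + 1, by have := i.isLt; omega⟩

lemma modePerm_last (n m T : ℕ) (h1T : 1 ≤ T) (hch : T + m ≤ n) (i : Fin m)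
    (hi : i.val + 1 = m) : modePerm n m T h1T hch i = rot n T (by omega) := by
  simp [modePerm, hi]

lemma modePerm_swap (n m T : ℕ) (h1T : 1 ≤ T) (hch : T + m ≤ n) (i : Fin m)
    (hi : i.val + 1 ≠ m) : modePerm n m T h1T hch i = Equiv.swap
      ⟨avl T i.val, by have := i.isLt; unfold avl; split <;> omega⟩
      ⟨T + i.val + 1, by have := i.isLt; omega⟩ := by
  simp [modePerm, hi]

/-- weight function for the lower bound -/
def wt (T s : ℕ) {n : ℕ} (x : Fin n) : ℕ :=
  if x.val ≤ T then 1 else if x.val ≤ s then x.val - T + 1 else 0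

/-- the potential -/
def pot (T s : ℕ) {n : ℕ} (S : Finset (Fin n)) : ℕ := ∑ x ∈ S, wt T s x

lemma wt_rot (n T s : ℕ) (hT : T < n) (hTs : T ≤ s) (x : Fin n) :
    wt T s (rot n T hT x) = wt T s x := by
  unfold wt
  rw [rot_val]
  have := x.isLt
  split
  · have hx : x.val ≤ T := by omega
    simp only [if_pos hx]
    rw [if_pos (by omega)]
  · split
    · rw [if_pos (by omega), if_pos (by omega)]
    · rfl
open Finset

section GAME

/-- one step of the covering game -/
def gstep {n m : ℕ} (σ : Fin m → Equiv.Perm (Fin n)) (R : Finset (Fin n))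
    (S : Finset (Fin n)) (i : Fin m) : Finset (Fin n) := S.image (σ i) ∪ R

lemma R_subset_gstep {n m : ℕ} (σ : Fin m → Equiv.Perm (Fin n)) (R : Finset (Fin n))
    (S : Finset (Fin n)) (i : Fin m) : R ⊆ gstep σ R S i := Finset.subset_union_right

lemma mem_gstep_of_mem {n m : ℕ} (σ : Fin m → Equiv.Perm (Fin n)) (R : Finset (Fin n))
    {S : Finset (Fin n)} {y : Fin n} (hy : y ∈ S) (i : Fin m) :
    σ i y ∈ gstep σ R S i :=
  Finset.mem_union_left _ (Finset.mem_image_of_mem _ hy)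

lemma mem_gstep_of_fixed {n m : ℕ} (σ : Fin m → Equiv.Perm (Fin n)) (R : Finset (Fin n))
    {S : Finset (Fin n)} {x : Fin n} (i : Fin m) (hfix : σ i x = x) (hx : x ∈ S) :
    x ∈ gstep σ R S i := by
  have := mem_gstep_of_mem σ R hx i
  rwa [hfix] at this

lemma reach_eq_coord {n m r : ℕ} (σ : Fin m → Equiv.Perm (Fin n)) (emb : Fin r → Fin n)
    (hemb : Function.Injective emb) (π : List (Fin m)) :
    reach (fun i => pmat (σ i)) (fun _ => bmat emb) π
      = coordSub (π.foldl (gstep σ (Finset.image emb Finset.univ)) ∅) := by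
  have key : ∀ (π : List (Fin m)) (S : Finset (Fin n)),
      π.foldl (fun V i => Submodule.map (Matrix.mulVecLin (pmat (σ i))) V
          ⊔ LinearMap.range (Matrix.mulVecLin (bmat emb))) (coordSub S)
        = coordSub (π.foldl (gstep σ (Finset.image emb Finset.univ)) S) := by
    intro π
    induction π with
    | nil => intro S; rfl
    | cons i π ih =>
      intro S
      simp only [List.foldl_cons]
      have h0 : Submodule.map (Matrix.mulVecLin (pmat (σ i))) (coordSub S)
          ⊔ LinearMap.range (Matrix.mulVecLin (bmat emb))
          = coordSub (gstep σ (Finset.image emb Finset.univ) S i) := by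
        rw [pmat_map_coordSub, bmat_range emb hemb, coordSub_sup]; rfl
      rw [h0]
      exact ih _
  rw [reach, ← coordSub_empty, key]

end GAME

section POT

lemma pot_union_le {n : ℕ} (T s : ℕ) (X Y : Finset (Fin n)) :
    pot T s (X ∪ Y) ≤ pot T s X + pot T s Y := by
  unfold pot
  rw [← Finset.sum_union_inter]
  exact Nat.le_add_right _ _

lemma pot_image_perm {n : ℕ} (T s : ℕ) (σ : Equiv.Perm (Fin n)) (S : Finset (Fin n)) :
    pot T s (S.image σ) = ∑ x ∈ S, wt T s (σ x) :=
  Finset.sum_image (fun a _ b _ h => σ.injective h)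

lemma mem_image_swap {n : ℕ} (a b z : Fin n) (S : Finset (Fin n)) :
    z ∈ S.image (Equiv.swap a b) ↔ Equiv.swap a b z ∈ S := by
  rw [Finset.mem_image]
  constructor
  · rintro ⟨x, hx, rfl⟩
    rwa [Equiv.swap_apply_self]
  · intro h
    exact ⟨_, h, Equiv.swap_apply_self _ _ _⟩

lemma image_swap_both {n : ℕ} {a b : Fin n} {S : Finset (Fin n)}
    (ha : a ∈ S) (hb : b ∈ S) : S.image (Equiv.swap a b) = S := by
  ext z
  rw [mem_image_swap]
  by_cases hza : z = a
  · subst hza; rw [Equiv.swap_apply_left]; exact ⟨fun _ => ha, fun _ => hb⟩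
  by_cases hzb : z = b
  · subst hzb; rw [Equiv.swap_apply_right]; exact ⟨fun _ => hb, fun _ => ha⟩
  · rw [Equiv.swap_apply_of_ne_of_ne hza hzb]

lemma image_swap_none {n : ℕ} {a b : Fin n} {S : Finset (Fin n)}
    (ha : a ∉ S) (hb : b ∉ S) : S.image (Equiv.swap a b) = S := by
  ext z
  rw [mem_image_swap]
  by_cases hza : z = a
  · subst hza; rw [Equiv.swap_apply_left]
    exact ⟨fun h => absurd h hb, fun h => absurd h ha⟩
  by_cases hzb : z = b
  · subst hzb; rw [Equiv.swap_apply_right]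
    exact ⟨fun h => absurd h ha, fun h => absurd h hb⟩
  · rw [Equiv.swap_apply_of_ne_of_ne hza hzb]

lemma image_swap_left {n : ℕ} {a b : Fin n} (hab : a ≠ b) {S : Finset (Fin n)}
    (ha : a ∈ S) (hb : b ∉ S) :
    S.image (Equiv.swap a b) = insert b (S.erase a) := by
  ext z
  rw [mem_image_swap, Finset.mem_insert, Finset.mem_erase]
  by_cases hza : z = a
  · subst hza; rw [Equiv.swap_apply_left]
    constructor
    · intro h; exact absurd h hb
    · rintro (h | ⟨h, _⟩) <;> [exact absurd h hab; exact absurd rfl h]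
  by_cases hzb : z = b
  · subst hzb; rw [Equiv.swap_apply_right]
    exact ⟨fun _ => Or.inl rfl, fun _ => ha⟩
  · rw [Equiv.swap_apply_of_ne_of_ne hza hzb]
    exact ⟨fun h => Or.inr ⟨hza, h⟩, fun h => by
      rcases h with h | ⟨_, h⟩; exact absurd h hzb; exact h⟩

/-- The key swap inequality for the potential. -/
lemma pot_image_swap {n : ℕ} (T s : ℕ) {a b : Fin n} (hab : a ≠ b)
    (hw : wt T s b = wt T s a + 1) (S : Finset (Fin n)) :
    pot T s (S.image (Equiv.swap a b)) ≤ pot T s S + 1 := by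
  by_cases ha : a ∈ S <;> by_cases hb : b ∈ S
  · rw [image_swap_both ha hb]; omega
  · rw [image_swap_left hab ha hb]
    unfold pot
    rw [Finset.sum_insert (by simp [hb]), ← Finset.add_sum_erase _ _ ha]
    omega
  · rw [Equiv.swap_comm, image_swap_left hab.symm hb ha]
    unfold pot
    rw [Finset.sum_insert (by simp [ha]), ← Finset.add_sum_erase _ _ hb]
    omega
  · rw [image_swap_none ha hb]; omega

end POT
section SYS

def sysPerm (n m r : ℕ) (hr : 1 ≤ r) (hm : 1 ≤ m) (hmn : m ≤ n - r) :
    Fin m → Equiv.Perm (Fin n) :=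
  modePerm n m (n - r + 1 - m) (by omega) (by omega)

def sysEmb (n m r : ℕ) (hr : 1 ≤ r) (hm : 1 ≤ m) (hmn : m ≤ n - r) : Fin r → Fin n :=
  fun j => ⟨if j.val = 0 then 0 else (n - r) + j.val, by have := j.isLt; split <;> omega⟩

lemma sysEmb_inj (n m r : ℕ) (hr : 1 ≤ r) (hm : 1 ≤ m) (hmn : m ≤ n - r) :
    Function.Injective (sysEmb n m r hr hm hmn) := by
  intro j1 j2 h
  have h' := congrArg Fin.val h
  simp only [sysEmb] at h'
  apply Fin.ext
  split_ifs at h' <;> omega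

def sysR (n m r : ℕ) (hr : 1 ≤ r) (hm : 1 ≤ m) (hmn : m ≤ n - r) : Finset (Fin n) :=
  Finset.image (sysEmb n m r hr hm hmn) Finset.univ

lemma mem_sysR_iff (n m r : ℕ) (hr : 1 ≤ r) (hm : 1 ≤ m) (hmn : m ≤ n - r) (x : Fin n) :
    x ∈ sysR n m r hr hm hmn ↔ x.val = 0 ∨ n - r < x.val := by
  constructor
  · intro hx
    obtain ⟨j, -, rfl⟩ := Finset.mem_image.mp hx
    simp only [sysEmb]
    split <;> omega
  · intro hx
    rw [sysR, Finset.mem_image]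
    rcases hx with hx | hx
    · refine ⟨⟨0, by omega⟩, Finset.mem_univ _, ?_⟩
      apply Fin.ext
      simp [sysEmb, hx]
    · have hxn := x.isLt
      refine ⟨⟨x.val - (n - r), by omega⟩, Finset.mem_univ _, ?_⟩
      apply Fin.ext
      simp only [sysEmb]
      rw [if_neg (by omega)]
      omega

lemma pot_sysR (n m r : ℕ) (hr : 1 ≤ r) (hm : 1 ≤ m) (hmn : m ≤ n - r) :
    pot (n - r + 1 - m) (n - r) (sysR n m r hr hm hmn) = 1 := by
  rw [sysR, pot, Finset.sum_image (fun a _ b _ h => sysEmb_inj n m r hr hm hmn h)]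
  rw [Finset.sum_congr rfl
    (g := fun j => if j = (⟨0, by omega⟩ : Fin r) then 1 else 0)]
  · rw [Finset.sum_ite_eq' Finset.univ (⟨0, by omega⟩ : Fin r) (fun _ => 1)]
    simp
  · intro j _
    have hjlt := j.isLt
    by_cases hj : j.val = 0
    · have h2 : j = (⟨0, by omega⟩ : Fin r) := Fin.ext (by simpa using hj)
      rw [if_pos h2]
      have hval : (sysEmb n m r hr hm hmn j).val = 0 := by simp [sysEmb, hj]
      unfold wt
      rw [hval, if_pos (Nat.zero_le _)]
    · have h2 : ¬ (j = (⟨0, by omega⟩ : Fin r)) := fun hc => hj (by rw [hc])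
      rw [if_neg h2]
      have hval : (sysEmb n m r hr hm hmn j).val = n - r + j.val := by simp [sysEmb, hj]
      unfold wt
      rw [hval, if_neg (by omega), if_neg (by omega)]

lemma pot_gstep_le (n m r : ℕ) (hr : 1 ≤ r) (hm : 1 ≤ m) (hmn : m ≤ n - r)
    (S : Finset (Fin n)) (i : Fin m)
    (hS : S = ∅ ∨ sysR n m r hr hm hmn ⊆ S) :
    pot (n - r + 1 - m) (n - r) (gstep (sysPerm n m r hr hm hmn) (sysR n m r hr hm hmn) S i)
      ≤ pot (n - r + 1 - m) (n - r) S + 1 := by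
  set T := n - r + 1 - m with hT
  set s := n - r with hs
  rcases hS with rfl | hRS
  · rw [gstep, Finset.image_empty, Finset.empty_union, pot_sysR]
    simp [pot]
  · by_cases hi : i.val + 1 = m
    · -- rotation step
      rw [gstep, sysPerm, modePerm_last n m T (by omega) (by omega) i hi]
      calc pot T s (Finset.image (⇑(rot n T (by omega))) S ∪ sysR n m r hr hm hmn)
          ≤ pot T s (Finset.image (⇑(rot n T (by omega))) S)
            + pot T s (sysR n m r hr hm hmn) := pot_union_le T s _ _
        _ = pot T s S + 1 := by
            rw [pot_sysR, pot_image_perm]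
            unfold pot
            rw [Finset.sum_congr rfl (fun x _ => wt_rot n T s (by omega) (by omega) x)]
    · -- swap step
      have him := i.isLt
      rw [gstep, sysPerm, modePerm_swap n m T (by omega) (by omega) i hi]
      set a : Fin n := ⟨avl T i.val, by unfold avl; split <;> omega⟩ with ha
      set b : Fin n := ⟨T + i.val + 1, by omega⟩ with hb
      have hava : a.val = avl T i.val := rfl
      have havb : b.val = T + i.val + 1 := rfl
      have hane : a ≠ b := by
        intro hc
        have hv := congrArg Fin.val hc
        rw [hava, havb] at hv
        unfold avl at hv
        split_ifs at hv <;> omega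
      have haval : 1 ≤ a.val ∧ a.val ≤ s := by
        rw [hava]; unfold avl; split <;> omega
      have hbval : 1 ≤ b.val ∧ b.val ≤ s := by rw [havb]; omega
      have habs : Finset.image (⇑(Equiv.swap a b)) S ∪ sysR n m r hr hm hmn
          = Finset.image (⇑(Equiv.swap a b)) S := by
        apply Finset.union_eq_left.mpr
        intro x hx
        rw [mem_sysR_iff] at hx
        have hxa : x ≠ a := by
          intro hc
          have hv := congrArg Fin.val hc
          omega
        have hxb : x ≠ b := by
          intro hc
          have hv := congrArg Fin.val hc
          omega
        rw [mem_image_swap, Equiv.swap_apply_of_ne_of_ne hxa hxb]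
        exact hRS ((mem_sysR_iff n m r hr hm hmn x).mpr hx)
      rw [habs]
      apply pot_image_swap T s hane
      -- weight relation
      unfold wt
      rw [hava, havb]
      unfold avl
      split_ifs <;> omega

lemma pot_foldl_le (n m r : ℕ) (hr : 1 ≤ r) (hm : 1 ≤ m) (hmn : m ≤ n - r)
    (π : List (Fin m)) :
    ∀ S : Finset (Fin n), (S = ∅ ∨ sysR n m r hr hm hmn ⊆ S) →
    pot (n - r + 1 - m) (n - r)
        (π.foldl (gstep (sysPerm n m r hr hm hmn) (sysR n m r hr hm hmn)) S)
      ≤ pot (n - r + 1 - m) (n - r) S + π.length := by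
  induction π with
  | nil => intro S _; simp
  | cons i π ih =>
    intro S hS
    simp only [List.foldl_cons, List.length_cons]
    calc pot (n - r + 1 - m) (n - r) (π.foldl _ (gstep _ _ S i))
        ≤ pot (n - r + 1 - m) (n - r) (gstep (sysPerm n m r hr hm hmn)
            (sysR n m r hr hm hmn) S i) + π.length :=
          ih _ (Or.inr (R_subset_gstep _ _ _ _))
      _ ≤ pot (n - r + 1 - m) (n - r) S + 1 + π.length := by
          have := pot_gstep_le n m r hr hm hmn S i hS
          omega
      _ = pot (n - r + 1 - m) (n - r) S + (π.length + 1) := by omega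

lemma gauss_aux : ∀ k : ℕ, 2 * (∑ j ∈ Finset.range k, (j + 2)) = k * k + 3 * k := by
  intro k
  induction k with
  | zero => simp
  | succ k ih =>
    rw [Finset.sum_range_succ]
    have e : (k+1) * (k+1) + 3 * (k+1) = (k * k + 3 * k) + (2 * (k + 2)) := by ring
    rw [e, ← ih]
    ring

lemma pot_univ_eq (n m r : ℕ) (hr : 1 ≤ r) (hm : 1 ≤ m) (hmn : m ≤ n - r) :
    pot (n - r + 1 - m) (n - r) (Finset.univ : Finset (Fin n))
      = n - r + 1 + m * (m - 1) / 2 := by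
  set T := n - r + 1 - m with hT
  set s := n - r with hs
  have hsn : s < n := by omega
  have h1 : pot T s (Finset.univ : Finset (Fin n))
      = ∑ v ∈ Finset.range n, (if v ≤ T then 1 else if v ≤ s then v - T + 1 else 0) := by
    rw [pot]
    exact Fin.sum_univ_eq_sum_range (fun v => if v ≤ T then 1 else if v ≤ s then v - T + 1 else 0) n
  rw [h1, Finset.range_eq_Ico,
    ← Finset.sum_Ico_consecutive _ (Nat.zero_le (s+1)) (show s+1 ≤ n by omega),
    ← Finset.sum_Ico_consecutive _ (Nat.zero_le (T+1)) (show T+1 ≤ s+1 by omega)]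
  have e1 : ∑ v ∈ Finset.Ico 0 (T+1), (if v ≤ T then 1 else if v ≤ s then v - T + 1 else 0)
      = T + 1 := by
    rw [Finset.sum_congr rfl (g := fun _ => 1)]
    · simp
    · intro v hv
      rw [Finset.mem_Ico] at hv
      rw [if_pos (by omega)]
  have e3 : ∑ v ∈ Finset.Ico (s+1) n, (if v ≤ T then 1 else if v ≤ s then v - T + 1 else 0)
      = 0 := by
    apply Finset.sum_eq_zero
    intro v hv
    rw [Finset.mem_Ico] at hv
    rw [if_neg (by omega), if_neg (by omega)]
  have e2 : ∑ v ∈ Finset.Ico (T+1) (s+1), (if v ≤ T then 1 else if v ≤ s then v - T + 1 else 0)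
      = ∑ j ∈ Finset.range (m-1), (j + 2) := by
    rw [Finset.sum_Ico_eq_sum_range]
    have hc : s + 1 - (T + 1) = m - 1 := by omega
    rw [hc]
    apply Finset.sum_congr rfl
    intro j hj
    rw [Finset.mem_range] at hj
    rw [if_neg (by omega), if_pos (by omega)]
    omega
  rw [e1, e2, e3]
  have hX := gauss_aux (m - 1)
  have hP : 2 * (m * (m - 1) / 2) = m * (m - 1) := by
    apply Nat.two_mul_div_two_of_even
    have := Nat.even_mul_succ_self (m - 1)
    have hms : (m - 1) + 1 = m := by omega
    rw [hms] at this
    rwa [mul_comm]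
  have hrel : m * (m - 1) = (m-1) * (m-1) + (m - 1) := by
    cases m with
    | zero => omega
    | succ k => simp only [Nat.succ_sub_one]; ring
  obtain ⟨Q, hQ⟩ : ∃ Q, (m-1) * (m-1) = Q := ⟨_, rfl⟩
  rw [hQ] at hX
  rw [hrel, hQ] at hP
  omega

end SYS
section WORD

def mode (m : ℕ) (hm : 1 ≤ m) (j : ℕ) : Fin m := ⟨j % m, Nat.mod_lt _ (by omega)⟩

lemma mode_val (m : ℕ) (hm : 1 ≤ m) (j : ℕ) (hj : j < m) : (mode m hm j).val = j :=
  Nat.mod_eq_of_lt hj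

def Wword (m : ℕ) (hm : 1 ≤ m) (k : ℕ) : List (Fin m) :=
  mode m hm (m-1) :: (List.range (k+1)).map (mode m hm)

def Eword (m : ℕ) (hm : 1 ≤ m) : ℕ → List (Fin m)
  | 0 => Wword m hm 0
  | (k+1) => Wword m hm (k+1) ++ Eword m hm k

def fullWord (n m r : ℕ) (hm : 1 ≤ m) : List (Fin m) :=
  mode m hm (m-1) :: ((if m = 1 then [] else Eword m hm (m-2))
    ++ List.replicate (n - r + 1 - m) (mode m hm (m-1)))

lemma Wword_length (m : ℕ) (hm : 1 ≤ m) (k : ℕ) : (Wword m hm k).length = k + 2 := by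
  simp [Wword]

lemma Eword_length (m : ℕ) (hm : 1 ≤ m) :
    ∀ k, 2 * (Eword m hm k).length = (k+1) * (k+4) := by
  intro k
  induction k with
  | zero => simp [Eword, Wword]
  | succ k ih =>
    show 2 * (Wword m hm (k+1) ++ Eword m hm k).length = _
    rw [List.length_append, Wword_length]
    have e : (k+1+1) * (k+1+4) = (k+1) * (k+4) + 2 * (k + 3) := by ring
    rw [e, ← ih]
    ring

lemma fullWord_length (n m r : ℕ) (hr : 1 ≤ r) (hm : 1 ≤ m) (hmn : m ≤ n - r) :
    (fullWord n m r hm).length = n - r + 1 + m * (m - 1) / 2 := by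
  have hP : 2 * (m * (m - 1) / 2) = m * (m - 1) := by
    apply Nat.two_mul_div_two_of_even
    have := Nat.even_mul_succ_self (m - 1)
    have hms : (m - 1) + 1 = m := by omega
    rw [hms] at this
    rwa [mul_comm]
  rw [fullWord]
  by_cases h1 : m = 1
  · subst h1
    simp
  · rw [if_neg h1]
    simp only [List.length_cons, List.length_append, List.length_replicate]
    have hE := Eword_length m hm (m - 2)
    have e2 : (m - 2 + 1) = m - 1 := by omega
    have e3 : (m - 2 + 4) = m + 2 := by omega
    rw [e2, e3] at hE
    have hrel : (m - 1) * (m + 2) = m * (m - 1) + 2 * (m - 1) := by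
      cases m with
      | zero => omega
      | succ k =>
        simp only [Nat.succ_sub_one]
        ring
    rw [hrel] at hE
    obtain ⟨Q, hQ⟩ : ∃ Q, m * (m - 1) = Q := ⟨_, rfl⟩
    rw [hQ] at hE hP
    omega

end WORD

section COVER

variable (n m r : ℕ) (hr : 1 ≤ r) (hm : 1 ≤ m) (hmn : m ≤ n - r)

/-- abbreviation for the game step of our system -/
def sysG : Finset (Fin n) → Fin m → Finset (Fin n) :=
  gstep (sysPerm n m r hr hm hmn) (sysR n m r hr hm hmn)

lemma sysR_subset_sysG (S : Finset (Fin n)) (i : Fin m) :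
    sysR n m r hr hm hmn ⊆ sysG n m r hr hm hmn S i := Finset.subset_union_right

lemma sysR_subset_foldl (π : List (Fin m)) :
    ∀ S, sysR n m r hr hm hmn ⊆ S → sysR n m r hr hm hmn ⊆ π.foldl (sysG n m r hr hm hmn) S := by
  induction π with
  | nil => intro S h; exact h
  | cons i π ih => intro S h; exact ih _ (sysR_subset_sysG n m r hr hm hmn S i)

lemma hub_mem_sysR : (⟨0, by omega⟩ : Fin n) ∈ sysR n m r hr hm hmn := by
  rw [mem_sysR_iff]; left; rfl

lemma sysPerm_last_eq :
    sysPerm n m r hr hm hmn (mode m hm (m-1)) = rot n (n - r + 1 - m) (by omega) := by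
  rw [sysPerm]
  exact modePerm_last n m _ (by omega) (by omega) _ (by rw [mode_val m hm _ (by omega)]; omega)

lemma sysG_last_step (S : Finset (Fin n)) (v : ℕ) (hv : v < n - r + 1 - m)
    (hn : v < n) (hvn : v + 1 < n)
    (h : (⟨v, hn⟩ : Fin n) ∈ S) :
    (⟨v + 1, hvn⟩ : Fin n) ∈ sysG n m r hr hm hmn S (mode m hm (m-1)) := by
  have := mem_gstep_of_mem (sysPerm n m r hr hm hmn) (sysR n m r hr hm hmn) h (mode m hm (m-1))
  have heq : sysPerm n m r hr hm hmn (mode m hm (m-1)) ⟨v, hn⟩ = ⟨v + 1, hvn⟩ := by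
    rw [sysPerm_last_eq]
    apply Fin.ext
    rw [rot_val]
    simp only [if_pos hv]
  rwa [heq] at this

lemma sysG_last_fix (S : Finset (Fin n)) (x : Fin n) (hx : n - r + 1 - m < x.val)
    (h : x ∈ S) : x ∈ sysG n m r hr hm hmn S (mode m hm (m-1)) := by
  apply mem_gstep_of_fixed _ _ _ _ h
  rw [sysPerm_last_eq]
  apply Fin.ext
  rw [rot_val, if_neg (by omega), if_neg (by omega)]

lemma sysPerm_swap_eq (k : ℕ) (hk : k + 1 < m) :
    sysPerm n m r hr hm hmn (mode m hm k)
      = Equiv.swap ⟨avl (n - r + 1 - m) k, by unfold avl; split <;> omega⟩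
        ⟨(n - r + 1 - m) + k + 1, by omega⟩ := by
  rw [sysPerm]
  rw [modePerm_swap n m _ (by omega) (by omega) _ (by rw [mode_val m hm _ (by omega)]; omega)]
  congr 1 <;> apply Fin.ext <;> simp [mode_val m hm k (by omega)]

lemma sysG_swap_step (S : Finset (Fin n)) (k : ℕ) (hk : k + 1 < m)
    (ha : (⟨avl (n - r + 1 - m) k, by unfold avl; split <;> omega⟩ : Fin n) ∈ S) :
    (⟨(n - r + 1 - m) + k + 1, by omega⟩ : Fin n)
      ∈ sysG n m r hr hm hmn S (mode m hm k) := by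
  have := mem_gstep_of_mem (sysPerm n m r hr hm hmn) (sysR n m r hr hm hmn) ha (mode m hm k)
  rwa [sysPerm_swap_eq n m r hr hm hmn k hk, Equiv.swap_apply_left] at this

lemma sysG_swap_fix (S : Finset (Fin n)) (k : ℕ) (hk : k + 1 < m) (x : Fin n)
    (hxa : x.val ≠ avl (n - r + 1 - m) k) (hxb : x.val ≠ (n - r + 1 - m) + k + 1)
    (h : x ∈ S) : x ∈ sysG n m r hr hm hmn S (mode m hm k) := by
  apply mem_gstep_of_fixed _ _ _ _ h
  rw [sysPerm_swap_eq n m r hr hm hmn k hk]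
  apply Equiv.swap_apply_of_ne_of_ne
  · intro hc; exact hxa (congrArg Fin.val hc)
  · intro hc; exact hxb (congrArg Fin.val hc)

lemma tail_phase :
    ∀ j, j ≤ n - r + 1 - m → ∀ S : Finset (Fin n), sysR n m r hr hm hmn ⊆ S →
      (∀ v, 1 ≤ v → v ≤ j → ∀ h : v < n,
        (⟨v, h⟩ : Fin n) ∈ (List.replicate j (mode m hm (m-1))).foldl (sysG n m r hr hm hmn) S) ∧
      (∀ x ∈ S, n - r + 1 - m < x.val →
        x ∈ (List.replicate j (mode m hm (m-1))).foldl (sysG n m r hr hm hmn) S) ∧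
      sysR n m r hr hm hmn ⊆ (List.replicate j (mode m hm (m-1))).foldl (sysG n m r hr hm hmn) S := by
  intro j
  induction j with
  | zero =>
    intro _ S hS
    refine ⟨fun v hv1 hv2 h => by omega, fun x hx _ => hx, hS⟩
  | succ j ih =>
    intro hj S hS
    rw [List.replicate_succ', List.foldl_append]
    obtain ⟨ih1, ih2, ih3⟩ := ih (by omega) S hS
    set F := (List.replicate j (mode m hm (m-1))).foldl (sysG n m r hr hm hmn) S with hF
    refine ⟨?_, ?_, ?_⟩
    · intro v hv1 hv2 h
      simp only [List.foldl_cons, List.foldl_nil]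
      rcases Nat.eq_or_lt_of_le hv1 with hv | hv
      · -- v = 1
        have h0 : (⟨0, by omega⟩ : Fin n) ∈ F := ih3 (hub_mem_sysR n m r hr hm hmn)
        have := sysG_last_step n m r hr hm hmn F 0 (by omega) (by omega) (by omega) h0
        have he : (⟨0 + 1, by omega⟩ : Fin n) = ⟨v, h⟩ := Fin.mk_eq_mk.mpr (by omega)
        rwa [he] at this
      · -- v ≥ 2
        have hm1 : (⟨v - 1, by omega⟩ : Fin n) ∈ F := ih1 (v-1) (by omega) (by omega) (by omega)
        have := sysG_last_step n m r hr hm hmn F (v-1) (by omega) (by omega) (by omega) hm1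
        have he : (⟨v - 1 + 1, by omega⟩ : Fin n) = ⟨v, h⟩ := Fin.mk_eq_mk.mpr (by omega)
        rwa [he] at this
    · intro x hx hxv
      simp only [List.foldl_cons, List.foldl_nil]
      exact sysG_last_fix n m r hr hm hmn F x hxv (ih2 x hx hxv)
    · intro x hx
      simp only [List.foldl_cons, List.foldl_nil]
      exact sysR_subset_sysG n m r hr hm hmn F _ hx

lemma deliver_phase :
    ∀ k, k + 1 < m → ∀ S : Finset (Fin n), sysR n m r hr hm hmn ⊆ S →
      (∀ h : (n - r + 1 - m) + k + 1 < n,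
        (⟨(n - r + 1 - m) + k + 1, h⟩ : Fin n) ∈ (Wword m hm k).foldl (sysG n m r hr hm hmn) S) ∧
      (∀ x ∈ S, (n - r + 1 - m) + k + 1 < x.val →
        x ∈ (Wword m hm k).foldl (sysG n m r hr hm hmn) S) ∧
      sysR n m r hr hm hmn ⊆ (Wword m hm k).foldl (sysG n m r hr hm hmn) S := by
  intro k
  induction k with
  | zero =>
    intro hk S hS
    show _ ∧ (∀ x ∈ S, _ → x ∈ List.foldl _ S (_ :: [mode m hm 0])) ∧ _
    simp only [Wword, show List.range 1 = [0] from rfl, List.map_cons, List.map_nil,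
      List.foldl_cons, List.foldl_nil]
    set T := n - r + 1 - m with hT
    have hT1 : 1 ≤ T := by omega
    have h1 : (⟨1, by omega⟩ : Fin n) ∈ sysG n m r hr hm hmn S (mode m hm (m-1)) := by
      have h0 : (⟨0, by omega⟩ : Fin n) ∈ S := hS (hub_mem_sysR n m r hr hm hmn)
      have := sysG_last_step n m r hr hm hmn S 0 (by omega) (by omega) (by omega) h0
      have he : (⟨0 + 1, by omega⟩ : Fin n) = ⟨1, by omega⟩ := Fin.ext rfl
      rwa [he] at this
    refine ⟨?_, ?_, ?_⟩
    · intro h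
      have ha : (⟨avl T 0, by unfold avl; split <;> omega⟩ : Fin n)
          ∈ sysG n m r hr hm hmn S (mode m hm (m-1)) := by
        have he : (⟨avl T 0, by unfold avl; split <;> omega⟩ : Fin n) = ⟨1, by omega⟩ :=
          Fin.mk_eq_mk.mpr rfl
        rw [he]; exact h1
      have := sysG_swap_step n m r hr hm hmn _ 0 hk ha
      have he : (⟨T + 0 + 1, by omega⟩ : Fin n) = ⟨T + 0 + 1, h⟩ := Fin.mk_eq_mk.mpr rfl
      rwa [he] at this
    · intro x hx hxv
      apply sysG_swap_fix n m r hr hm hmn _ 0 hk x (by unfold avl; simp; omega) (by omega)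
      exact sysG_last_fix n m r hr hm hmn S x (by omega) hx
    · exact sysR_subset_sysG n m r hr hm hmn _ _
  | succ k ih =>
    intro hk S hS
    have hWsucc : Wword m hm (k+1) = Wword m hm k ++ [mode m hm (k+1)] := by
      rw [Wword, Wword, List.range_succ, List.map_append]
      rfl
    rw [hWsucc, List.foldl_append]
    obtain ⟨ih1, ih2, ih3⟩ := ih (by omega) S hS
    set T := n - r + 1 - m with hT
    set F := (Wword m hm k).foldl (sysG n m r hr hm hmn) S with hF
    simp only [List.foldl_cons, List.foldl_nil]
    refine ⟨?_, ?_, ?_⟩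
    · intro h
      have ha : (⟨avl T (k+1), by unfold avl; split <;> omega⟩ : Fin n) ∈ F := by
        have he : (⟨avl T (k+1), by unfold avl; split <;> omega⟩ : Fin n)
            = ⟨T + k + 1, by omega⟩ := Fin.mk_eq_mk.mpr (by unfold avl; rw [if_neg (by omega)]; omega)
        rw [he]
        exact ih1 (by omega)
      have := sysG_swap_step n m r hr hm hmn F (k+1) hk ha
      have he : (⟨T + (k+1) + 1, by omega⟩ : Fin n) = ⟨T + (k+1) + 1, h⟩ := Fin.mk_eq_mk.mpr rfl
      rwa [he] at this
    · intro x hx hxv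
      apply sysG_swap_fix n m r hr hm hmn F (k+1) hk x
        (by unfold avl; rw [if_neg (by omega)]; omega) (by omega)
      exact ih2 x hx (by omega)
    · exact sysR_subset_sysG n m r hr hm hmn _ _

lemma deliveries_phase :
    ∀ k, k + 1 < m → ∀ S : Finset (Fin n), sysR n m r hr hm hmn ⊆ S →
      (∀ j, j ≤ k → ∀ h : (n - r + 1 - m) + j + 1 < n,
        (⟨(n - r + 1 - m) + j + 1, h⟩ : Fin n) ∈ (Eword m hm k).foldl (sysG n m r hr hm hmn) S) ∧
      (∀ x ∈ S, (n - r + 1 - m) + k + 1 < x.val →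
        x ∈ (Eword m hm k).foldl (sysG n m r hr hm hmn) S) ∧
      sysR n m r hr hm hmn ⊆ (Eword m hm k).foldl (sysG n m r hr hm hmn) S := by
  intro k
  induction k with
  | zero =>
    intro hk S hS
    obtain ⟨d1, d2, d3⟩ := deliver_phase n m r hr hm hmn 0 hk S hS
    rw [show Eword m hm 0 = Wword m hm 0 from rfl]
    refine ⟨?_, d2, d3⟩
    intro j hj h
    have hj0 : j = 0 := by omega
    subst hj0
    exact d1 h
  | succ k ih =>
    intro hk S hS
    rw [show Eword m hm (k+1) = Wword m hm (k+1) ++ Eword m hm k from rfl, List.foldl_append]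
    obtain ⟨d1, d2, d3⟩ := deliver_phase n m r hr hm hmn (k+1) hk S hS
    set F1 := (Wword m hm (k+1)).foldl (sysG n m r hr hm hmn) S with hF1
    obtain ⟨e1, e2, e3⟩ := ih (by omega) F1 d3
    refine ⟨?_, ?_, e3⟩
    · intro j hj h
      rcases Nat.lt_or_ge j (k+1) with hjk | hjk
      · exact e1 j (by omega) h
      · have hj1 : j = k + 1 := by omega
        subst hj1
        refine e2 _ (d1 h) ?_
        show (n - r + 1 - m) + k + 1 < (n - r + 1 - m) + (k + 1) + 1
        omega
    · intro x hx hxv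
      exact e2 x (d2 x hx (by omega)) (by omega)

lemma fullWord_covers :
    (fullWord n m r hm).foldl (sysG n m r hr hm hmn) ∅ = Finset.univ := by
  set T := n - r + 1 - m with hT
  rw [fullWord]
  simp only [List.foldl_cons, List.foldl_append]
  have hstart : sysG n m r hr hm hmn ∅ (mode m hm (m-1)) = sysR n m r hr hm hmn := by
    rw [sysG, gstep, Finset.image_empty, Finset.empty_union]
  rw [hstart]
  set D : List (Fin m) := if m = 1 then [] else Eword m hm (m-2) with hD
  set F1 := D.foldl (sysG n m r hr hm hmn) (sysR n m r hr hm hmn) with hF1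
  have hRF1 : sysR n m r hr hm hmn ⊆ F1 := by
    rw [hF1, hD]
    by_cases h1 : m = 1
    · rw [if_pos h1]; exact Finset.Subset.refl _
    · rw [if_neg h1]
      exact (deliveries_phase n m r hr hm hmn (m-2) (by omega) _ (Finset.Subset.refl _)).2.2
  have hchain : ∀ j, j + 1 < m → ∀ h : T + j + 1 < n, (⟨T + j + 1, h⟩ : Fin n) ∈ F1 := by
    intro j hj h
    have h1 : ¬ (m = 1) := by omega
    rw [hF1, hD, if_neg h1]
    exact (deliveries_phase n m r hr hm hmn (m-2) (by omega) _
      (Finset.Subset.refl _)).1 j (by omega) h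
  obtain ⟨t1, t2, t3⟩ := tail_phase n m r hr hm hmn T (le_refl T) F1 hRF1
  apply Finset.eq_univ_iff_forall.mpr
  intro x
  have hxn := x.isLt
  rcases Nat.lt_or_ge (n - r) x.val with hbig | hsmall
  · -- static or out of range: in R
    apply t3
    rw [mem_sysR_iff]
    right; exact hbig
  rcases Nat.eq_zero_or_pos x.val with h0 | hpos
  · apply t3
    rw [mem_sysR_iff]
    left; exact h0
  rcases le_or_gt x.val T with hle | hgt
  · -- tail cell
    have := t1 x.val hpos hle x.isLt
    have he : (⟨x.val, x.isLt⟩ : Fin n) = x := Fin.ext rfl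
    rwa [he] at this
  · -- chain cell
    have hj : x.val = T + (x.val - T - 1) + 1 := by omega
    have hjm : (x.val - T - 1) + 1 < m := by omega
    have hc := hchain (x.val - T - 1) hjm (by omega)
    have hcf := t2 _ hc (by
      show (n - r + 1 - m) < (n - r + 1 - m) + (x.val - (n - r + 1 - m) - 1) + 1
      omega)
    have he : (⟨T + (x.val - T - 1) + 1, by omega⟩ : Fin n) = x := by
      apply Fin.ext
      show T + (x.val - T - 1) + 1 = x.val
      omega
    rwa [he] at hcf

end COVER


/-- For `r ≥ 1` and `1 ≤ m ≤ n - r` there is a controllable system with invertible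
`A_i` and rank-`r` matrices `B_i` whose shortest controllable sequences have length
exactly `n - r + 1 + m(m-1)/2`. -/
theorem stmt15 (n m r : ℕ) (hr : 1 ≤ r) (hm : 1 ≤ m) (hmn : m ≤ n - r) :
    ∃ (A : Fin m → Matrix (Fin n) (Fin n) ℝ) (B : Fin m → Matrix (Fin n) (Fin r) ℝ),
      (∀ i, IsUnit (A i)) ∧
      (∀ i, (B i).rank = r) ∧
      (⋃ π : List (Fin m), (reach A B π : Set (Fin n → ℝ))) = Set.univ ∧
      (∃ π : List (Fin m), reach A B π = ⊤ ∧
        π.length = n - r + 1 + m * (m - 1) / 2) ∧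
      (∀ π : List (Fin m), reach A B π = ⊤ →
        n - r + 1 + m * (m - 1) / 2 ≤ π.length) := by
  have htop : reach (fun i => pmat (sysPerm n m r hr hm hmn i))
      (fun _ => bmat (sysEmb n m r hr hm hmn)) (fullWord n m r hm) = ⊤ := by
    rw [reach_eq_coord (sysPerm n m r hr hm hmn) (sysEmb n m r hr hm hmn)
      (sysEmb_inj n m r hr hm hmn),
      show gstep (sysPerm n m r hr hm hmn)
        (Finset.image (sysEmb n m r hr hm hmn) Finset.univ) = sysG n m r hr hm hmn from rfl,
      fullWord_covers n m r hr hm hmn, coordSub_univ]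
  refine ⟨fun i => pmat (sysPerm n m r hr hm hmn i), fun _ => bmat (sysEmb n m r hr hm hmn),
    fun i => isUnit_pmat _, fun i => bmat_rank _ (sysEmb_inj n m r hr hm hmn), ?_, ?_, ?_⟩
  · apply Set.eq_univ_iff_forall.mpr
    intro v
    exact Set.mem_iUnion.mpr ⟨fullWord n m r hm, by rw [htop]; simp⟩
  · exact ⟨fullWord n m r hm, htop, fullWord_length n m r hr hm hmn⟩
  · intro π hπ
    rw [reach_eq_coord (sysPerm n m r hr hm hmn) (sysEmb n m r hr hm hmn)
      (sysEmb_inj n m r hr hm hmn),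
      show gstep (sysPerm n m r hr hm hmn)
        (Finset.image (sysEmb n m r hr hm hmn) Finset.univ) = sysG n m r hr hm hmn from rfl,
      coordSub_eq_top_iff] at hπ
    cases π with
    | nil =>
      exfalso
      rw [List.foldl_nil] at hπ
      have h0 : (⟨0, by omega⟩ : Fin n) ∈ (∅ : Finset (Fin n)) := by
        rw [hπ]; exact Finset.mem_univ _
      simp at h0
    | cons i π' =>
      rw [List.foldl_cons] at hπ
      have hfirst : sysG n m r hr hm hmn ∅ i = sysR n m r hr hm hmn := by
        rw [sysG, gstep, Finset.image_empty, Finset.empty_union]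
      rw [hfirst] at hπ
      have hb := pot_foldl_le n m r hr hm hmn π' (sysR n m r hr hm hmn)
        (Or.inr (Finset.Subset.refl _))
      rw [show gstep (sysPerm n m r hr hm hmn) (sysR n m r hr hm hmn)
        = sysG n m r hr hm hmn from rfl] at hb
      rw [hπ, pot_sysR n m r hr hm hmn, pot_univ_eq n m r hr hm hmn] at hb
      simp only [List.length_cons]
      omega
end

section
/- For all integers n, m with 1 ≤ m ≤ n, there exist matrices A_1,…,A_m ∈ ℝ^{n×n} (not necessarily invertible) and B_1,…,B_m ∈ ℝ^{n×1} such that the associated switched linear control system is controllable, there exists a controllable switching sequence of length (n-m+1)m + m(m-1)/2, and no controllable switching sequence has length strictly smaller than (n-m+1)m + m(m-1)/2. -/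
namespace S18

def pm (m n k j : ℕ) : ℕ :=
  if k + 1 = m then (if j < m - 2 then j else if j + 1 = n then m - 2 else j + 1)
  else if k = 0 then j
  else if j + 1 = k then k else if j = k then k - 1 else j

def qm (m n k j : ℕ) : ℕ :=
  if k + 1 = m then (if j < m - 2 then j else if j = m - 2 then n - 1 else j - 1)
  else if k = 0 then j
  else if j + 1 = k then k else if j = k then k - 1 else j

lemma pm_lt {m n k j : ℕ} (hmn : m ≤ n) (hk : k < m) (hj : j < n) :
    pm m n k j < n := by unfold pm; split_ifs <;> omega

lemma qm_lt {m n k j : ℕ} (hmn : m ≤ n) (hk : k < m) (hj : j < n) :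
    qm m n k j < n := by unfold qm; split_ifs <;> omega

lemma qm_pm {m n k j : ℕ} (hmn : m ≤ n) (hk : k < m) (hj : j < n) :
    qm m n k (pm m n k j) = j := by
  unfold pm qm; split_ifs <;> omega

lemma pm_qm {m n k j : ℕ} (hmn : m ≤ n) (hk : k < m) (hj : j < n) :
    pm m n k (qm m n k j) = j := by
  unfold pm qm; split_ifs <;> omega

variable {n m : ℕ}

/-- the permutation as a map on `Fin n`. -/
def sg (n m : ℕ) (k : Fin m) (j : Fin n) : Fin n :=
  ⟨pm m n k j % n, Nat.mod_lt _ j.pos⟩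

def sginv (n m : ℕ) (k : Fin m) (j : Fin n) : Fin n :=
  ⟨qm m n k j % n, Nat.mod_lt _ j.pos⟩

lemma sg_val (hmn : m ≤ n) (k : Fin m) (j : Fin n) : (sg n m k j : ℕ) = pm m n k j := by
  simp [sg, Nat.mod_eq_of_lt (pm_lt hmn k.isLt j.isLt)]

lemma sginv_val (hmn : m ≤ n) (k : Fin m) (j : Fin n) : (sginv n m k j : ℕ) = qm m n k j := by
  simp [sginv, Nat.mod_eq_of_lt (qm_lt hmn k.isLt j.isLt)]

lemma sginv_sg (hmn : m ≤ n) (k : Fin m) (j : Fin n) : sginv n m k (sg n m k j) = j := by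
  apply Fin.ext
  rw [sginv_val hmn, sg_val hmn, qm_pm hmn k.isLt j.isLt]

lemma sg_sginv (hmn : m ≤ n) (k : Fin m) (j : Fin n) : sg n m k (sginv n m k j) = j := by
  apply Fin.ext
  rw [sg_val hmn, sginv_val hmn, pm_qm hmn k.isLt j.isLt]

/-- combinatorial step on finsets of coordinates. -/
def stepF (n m : ℕ) (S : Finset (Fin n)) (k : Fin m) : Finset (Fin n) :=
  S.image (sg n m k) ∪
    (if (k : ℕ) = 0 then Finset.univ.filter (fun j : Fin n => (j : ℕ) = 0) else ∅)

lemma mem_image_sg (hmn : m ≤ n) (S : Finset (Fin n)) (k : Fin m) (j : Fin n) :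
    j ∈ S.image (sg n m k) ↔ sginv n m k j ∈ S := by
  constructor
  · rintro h
    obtain ⟨x, hx, rfl⟩ := Finset.mem_image.1 h
    rwa [sginv_sg hmn]
  · intro h
    exact Finset.mem_image.2 ⟨_, h, sg_sginv hmn k j⟩

/-- the matrices -/
def Am (n m : ℕ) (k : Fin m) : Matrix (Fin n) (Fin n) ℝ :=
  Matrix.of fun r c => if r = sg n m k c then 1 else 0

def Bm (n m : ℕ) (k : Fin m) : Matrix (Fin n) (Fin 1) ℝ :=
  Matrix.of fun r _ => if (k : ℕ) = 0 ∧ (r : ℕ) = 0 then 1 else 0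

lemma Am_single (k : Fin m) (j : Fin n) :
    (Am n m k).mulVecLin (Pi.single j 1) = Pi.single (sg n m k j) 1 := by
  rw [Matrix.mulVecLin_apply, Matrix.mulVec_single]
  ext r
  simp [Am, Pi.single_apply]

lemma Bm_zero (k : Fin m) (hk : (k : ℕ) ≠ 0) :
    LinearMap.range ((Bm n m k).mulVecLin) = ⊥ := by
  have h : Bm n m k = 0 := by
    ext r c; simp [Bm, hk]
  rw [h, Matrix.mulVecLin_zero, LinearMap.range_zero]

lemma Bm_apply (hn : 0 < n) (k : Fin m) (hk : (k : ℕ) = 0) (u : Fin 1 → ℝ) :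
    (Bm n m k).mulVecLin u = u 0 • (Pi.single (⟨0, hn⟩ : Fin n) (1:ℝ) : Fin n → ℝ) := by
  rw [Matrix.mulVecLin_apply]
  ext r
  simp only [Matrix.mulVec, dotProduct, Fin.sum_univ_one, Bm, Matrix.of_apply, hk,
    true_and, Pi.smul_apply, Pi.single_apply, smul_eq_mul]
  by_cases h : (r : ℕ) = 0
  · have : r = (⟨0, hn⟩ : Fin n) := Fin.ext h
    simp [h, this]
  · have : r ≠ (⟨0, hn⟩ : Fin n) := by simp [Fin.ext_iff, h]
    simp [h, this]

lemma Bm_range (hn : 0 < n) (k : Fin m) (hk : (k : ℕ) = 0) :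
    LinearMap.range ((Bm n m k).mulVecLin)
      = Submodule.span ℝ {Pi.single (⟨0, hn⟩ : Fin n) (1 : ℝ)} := by
  apply le_antisymm
  · rintro x ⟨u, rfl⟩
    rw [Bm_apply hn k hk]
    exact Submodule.smul_mem _ _ (Submodule.subset_span rfl)
  · rw [Submodule.span_le]
    rintro x rfl
    exact ⟨fun _ => 1, by rw [Bm_apply hn k hk]; simp⟩

/-! ## bridge between the matrix system and the finset system -/

noncomputable def ebv (n : ℕ) (j : Fin n) : Fin n → ℝ := Pi.single j 1

lemma step_span (hm : 1 ≤ m) (hmn : m ≤ n) (S : Finset (Fin n)) (k : Fin m) :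
    Submodule.map ((Am n m k).mulVecLin) (Submodule.span ℝ (ebv n '' (S : Set (Fin n))))
        ⊔ LinearMap.range ((Bm n m k).mulVecLin)
      = Submodule.span ℝ (ebv n '' ((stepF n m S k : Finset (Fin n)) : Set (Fin n))) := by
  have hn : 0 < n := by omega
  have himg : (Am n m k).mulVecLin '' (ebv n '' (S : Set (Fin n)))
      = ebv n '' ((sg n m k) '' (S : Set (Fin n))) := by
    rw [Set.image_image, Set.image_image]
    exact Set.image_congr fun j _ => Am_single k j
  rw [Submodule.map_span, himg]
  by_cases hk : (k : ℕ) = 0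
  · rw [Bm_range hn k hk]
    have hebv : ({Pi.single (⟨0, hn⟩ : Fin n) (1:ℝ)} : Set (Fin n → ℝ)) = {ebv n ⟨0, hn⟩} := rfl
    rw [hebv]
    have : ebv n '' ((sg n m k) '' (S : Set (Fin n))) ∪ {ebv n (⟨0, hn⟩ : Fin n)}
        = ebv n '' (((sg n m k) '' (S : Set (Fin n))) ∪ {(⟨0, hn⟩ : Fin n)}) := by
      rw [Set.image_union, Set.image_singleton]
    rw [← Submodule.span_union, this]
    congr 1
    have hfil : (Finset.univ.filter (fun j : Fin n => (j : ℕ) = 0)) = {(⟨0, hn⟩ : Fin n)} := by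
      ext j
      simp [Fin.ext_iff]
    rw [stepF, if_pos hk, hfil, Finset.coe_union, Finset.coe_image, Finset.coe_singleton]
  · rw [Bm_zero k hk, sup_bot_eq]
    congr 1
    rw [stepF, if_neg hk, Finset.union_empty, Finset.coe_image]

lemma run_span (hm : 1 ≤ m) (hmn : m ≤ n) (π : List (Fin m)) :
    ∀ S : Finset (Fin n),
      π.foldl (fun T i =>
          Submodule.map ((Am n m i).mulVecLin) T ⊔ LinearMap.range ((Bm n m i).mulVecLin))
        (Submodule.span ℝ (ebv n '' (S : Set (Fin n))))
      = Submodule.span ℝ (ebv n '' ((π.foldl (stepF n m) S : Finset (Fin n)) : Set (Fin n))) := by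
  induction π with
  | nil => intro S; rfl
  | cons k π ih =>
    intro S
    simp only [List.foldl_cons]
    rw [step_span hm hmn S k, ih]

lemma reach_eq (hm : 1 ≤ m) (hmn : m ≤ n) (π : List (Fin m)) :
    reach (Am n m) (Bm n m) π
      = Submodule.span ℝ (ebv n '' ((π.foldl (stepF n m) ∅ : Finset (Fin n)) : Set (Fin n))) := by
  have h0 : (⊥ : Submodule ℝ (Fin n → ℝ))
      = Submodule.span ℝ (ebv n '' ((∅ : Finset (Fin n)) : Set (Fin n))) := by
    simp
  rw [reach, h0, run_span hm hmn]

lemma span_univ_top :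
    Submodule.span ℝ (ebv n '' ((Finset.univ : Finset (Fin n)) : Set (Fin n))) = ⊤ := by
  rw [eq_top_iff]
  intro v _
  rw [pi_eq_sum_univ v]
  apply Submodule.sum_mem
  intro i _
  apply Submodule.smul_mem
  apply Submodule.subset_span
  refine ⟨i, by simp, ?_⟩
  funext j
  simp [ebv, Pi.single_apply, eq_comm]

lemma span_ne_top {S : Finset (Fin n)} {j : Fin n} (hj : j ∉ S) :
    Submodule.span ℝ (ebv n '' (S : Set (Fin n))) ≠ ⊤ := by
  intro h
  have hle : Submodule.span ℝ (ebv n '' (S : Set (Fin n)))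
      ≤ LinearMap.ker (LinearMap.proj (R := ℝ) (φ := fun _ : Fin n => ℝ) j) := by
    rw [Submodule.span_le]
    rintro x ⟨i, hi, rfl⟩
    have hij : i ≠ j := fun hij => hj (hij ▸ hi)
    simp [LinearMap.mem_ker, ebv, Pi.single_apply, hij]
  have hmem : ebv n j ∈ Submodule.span ℝ (ebv n '' (S : Set (Fin n))) := by
    rw [h]; trivial
  have := hle hmem
  simp [LinearMap.mem_ker, ebv] at this

lemma reach_top_iff (hm : 1 ≤ m) (hmn : m ≤ n) (π : List (Fin m)) :
    reach (Am n m) (Bm n m) π = ⊤ ↔ π.foldl (stepF n m) ∅ = Finset.univ := by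
  rw [reach_eq hm hmn]
  constructor
  · intro h
    by_contra hne
    have : ∃ j, j ∉ (π.foldl (stepF n m) ∅ : Finset (Fin n)) := by
      by_contra hc
      push_neg at hc
      exact hne (Finset.eq_univ_iff_forall.2 hc)
    obtain ⟨j, hj⟩ := this
    exact span_ne_top hj h
  · intro h; rw [h]; exact span_univ_top

/-! ## the potential function (for `2 ≤ m`) -/

def pot (n m : ℕ) (S : Finset (Fin n)) : ℕ :=
  (S.sum fun j => 1 + min (j : ℕ) (m - 2)) + S.sup (fun j => (j : ℕ) - (m - 2))

lemma pot_empty : pot n m (∅ : Finset (Fin n)) = 0 := by simp [pot]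

lemma pot_step (hm2 : 2 ≤ m) (hmn : m ≤ n) (S : Finset (Fin n)) (k : Fin m) :
    pot n m (stepF n m S k) ≤ pot n m S + 1 := by
  have hn : 0 < n := by omega
  have hinj : ∀ x ∈ S, ∀ y ∈ S, sg n m k x = sg n m k y → x = y := by
    intro x _ y _ h
    have := congrArg (sginv n m k) h
    rwa [sginv_sg hmn, sginv_sg hmn] at this
  by_cases hk0 : (k : ℕ) = 0
  · -- insert mode: `sg` is the identity
    have hsg : ∀ j : Fin n, sg n m k j = j := by
      intro j
      apply Fin.ext
      rw [sg_val hmn]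
      unfold pm
      rw [hk0]
      split_ifs <;> omega
    have himg : S.image (sg n m k) = S := by
      rw [show sg n m k = id from funext hsg, Finset.image_id]
    have hfil : (Finset.univ.filter (fun j : Fin n => (j : ℕ) = 0)) = {(⟨0, hn⟩ : Fin n)} := by
      ext j; simp [Fin.ext_iff]
    rw [stepF, if_pos hk0, himg, hfil]
    have hunion : S ∪ {(⟨0, hn⟩ : Fin n)} = insert (⟨0, hn⟩ : Fin n) S := by
      rw [Finset.union_comm, ← Finset.insert_eq]
    rw [hunion]
    by_cases hz : (⟨0, hn⟩ : Fin n) ∈ S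
    · rw [Finset.insert_eq_self.2 hz]; omega
    · rw [pot, Finset.sum_insert hz, Finset.sup_insert, pot]
      have h1 : (1 : ℕ) + min ((⟨0, hn⟩ : Fin n) : ℕ) (m - 2) = 1 := by simp
      have h2 : ((⟨0, hn⟩ : Fin n) : ℕ) - (m - 2) = 0 := by simp
      rw [h1, h2]
      have h3 : (0 : ℕ) ⊔ (S.sup fun j => (j : ℕ) - (m - 2))
          = S.sup fun j => (j : ℕ) - (m - 2) := by simp
      rw [h3]
      omega
  · have hstep : stepF n m S k = S.image (sg n m k) := by
      rw [stepF, if_neg hk0, Finset.union_empty]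
    rw [hstep, pot, Finset.sum_image hinj, Finset.sup_image]
    by_cases hkm : (k : ℕ) + 1 = m
    · -- ring mode
      have hsum : (S.sum fun j => 1 + min ((sg n m k j : Fin n) : ℕ) (m - 2))
          ≤ S.sum fun j => 1 + min (j : ℕ) (m - 2) := by
        apply Finset.sum_le_sum
        intro j _
        rw [sg_val hmn]
        unfold pm
        rw [if_pos hkm]
        have := j.isLt
        split_ifs <;> omega
      have hsup : (S.sup ((fun j : Fin n => (j : ℕ) - (m - 2)) ∘ sg n m k))
          ≤ (S.sup fun j : Fin n => (j : ℕ) - (m - 2)) + 1 := by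
        apply Finset.sup_le
        intro j hj
        simp only [Function.comp_apply]
        have hle : ((sg n m k j : Fin n) : ℕ) - (m - 2) ≤ ((j : ℕ) - (m - 2)) + 1 := by
          rw [sg_val hmn]
          unfold pm
          rw [if_pos hkm]
          have := j.isLt
          split_ifs <;> omega
        have h8 : (j : ℕ) - (m - 2) ≤ S.sup fun j : Fin n => (j : ℕ) - (m - 2) :=
          Finset.le_sup (f := fun j : Fin n => (j : ℕ) - (m - 2)) hj
        omega
      unfold pot
      omega
    · -- swap mode
      have hk1 : 1 ≤ (k : ℕ) := by omega
      have hkm2 : (k : ℕ) ≤ m - 2 := by have := k.isLt; omega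
      have hc : (k : ℕ) - 1 < n := by omega
      have hsum : (S.sum fun j => 1 + min ((sg n m k j : Fin n) : ℕ) (m - 2))
          ≤ (S.sum fun j => 1 + min (j : ℕ) (m - 2)) + 1 := by
        have hbd : ∀ j ∈ S, 1 + min ((sg n m k j : Fin n) : ℕ) (m - 2)
            ≤ (1 + min (j : ℕ) (m - 2)) + (if j = (⟨(k : ℕ) - 1, hc⟩ : Fin n) then 1 else 0) := by
          intro j _
          rw [sg_val hmn]
          unfold pm
          rw [if_neg hkm, if_neg hk0]
          have hj := j.isLt
          by_cases hjx : j = (⟨(k : ℕ) - 1, hc⟩ : Fin n)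
          · rw [if_pos hjx]
            have hv : (j : ℕ) = (k : ℕ) - 1 := by rw [hjx]
            split_ifs <;> omega
          · rw [if_neg hjx]
            have hv : (j : ℕ) ≠ (k : ℕ) - 1 := fun h => hjx (Fin.ext h)
            split_ifs <;> omega
        calc (S.sum fun j => 1 + min ((sg n m k j : Fin n) : ℕ) (m - 2))
            ≤ S.sum fun j => (1 + min (j : ℕ) (m - 2))
                + (if j = (⟨(k : ℕ) - 1, hc⟩ : Fin n) then 1 else 0) :=
              Finset.sum_le_sum hbd
          _ = (S.sum fun j => 1 + min (j : ℕ) (m - 2))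
              + S.sum fun j => (if j = (⟨(k : ℕ) - 1, hc⟩ : Fin n) then 1 else 0) := by
              rw [Finset.sum_add_distrib]
          _ ≤ (S.sum fun j => 1 + min (j : ℕ) (m - 2)) + 1 := by
              have h7 : (S.sum fun j => (if j = (⟨(k : ℕ) - 1, hc⟩ : Fin n) then 1 else 0))
                  = if (⟨(k : ℕ) - 1, hc⟩ : Fin n) ∈ S then 1 else 0 := Finset.sum_ite_eq' S _ _
              rw [h7]
              split_ifs <;> omega
      have hsup : (S.sup ((fun j : Fin n => (j : ℕ) - (m - 2)) ∘ sg n m k))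
          ≤ (S.sup fun j : Fin n => (j : ℕ) - (m - 2)) := by
        apply Finset.sup_le
        intro j hj
        simp only [Function.comp_apply]
        have hle : ((sg n m k j : Fin n) : ℕ) - (m - 2) ≤ (j : ℕ) - (m - 2) := by
          rw [sg_val hmn]
          unfold pm
          rw [if_neg hkm, if_neg hk0]
          have := j.isLt
          split_ifs <;> omega
        have h8 : (j : ℕ) - (m - 2) ≤ S.sup fun j : Fin n => (j : ℕ) - (m - 2) :=
          Finset.le_sup (f := fun j : Fin n => (j : ℕ) - (m - 2)) hj
        omega
      unfold pot
      omega

lemma pot_run (hm2 : 2 ≤ m) (hmn : m ≤ n) (π : List (Fin m)) :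
    ∀ S : Finset (Fin n), pot n m (π.foldl (stepF n m) S) ≤ pot n m S + π.length := by
  induction π with
  | nil => intro S; simp
  | cons k π ih =>
    intro S
    simp only [List.foldl_cons, List.length_cons]
    calc pot n m (π.foldl (stepF n m) (stepF n m S k))
        ≤ pot n m (stepF n m S k) + π.length := ih _
      _ ≤ pot n m S + 1 + π.length := by
          have := pot_step hm2 hmn S k; omega
      _ = pot n m S + (π.length + 1) := by omega

lemma sum_min (c t : ℕ) :
    ((Finset.range (c + t)).sum fun j => min j c) = ((Finset.range c).sum fun j => j) + t * c := by
  induction t with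
  | zero =>
    simp only [Nat.add_zero, Nat.zero_mul]
    apply Finset.sum_congr rfl
    intro j hj
    have := Finset.mem_range.1 hj
    omega
  | succ t ih =>
    have h1 : c + (t + 1) = (c + t) + 1 := by omega
    rw [h1, Finset.sum_range_succ, ih]
    have h2 : min (c + t) c = c := by omega
    rw [h2]
    ring

lemma pot_univ (hm2 : 2 ≤ m) (hmn : m ≤ n) :
    pot n m (Finset.univ : Finset (Fin n)) = (n - m + 1) * m + m * (m - 1) / 2 := by
  obtain ⟨e, rfl⟩ : ∃ e, m = e + 2 := ⟨m - 2, by omega⟩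
  obtain ⟨d, rfl⟩ : ∃ d, n = (e + 2) + d := ⟨n - (e + 2), by omega⟩
  have hme : (e + 2) - 2 = e := by omega
  have hsum : ((Finset.univ : Finset (Fin ((e+2)+d))).sum fun j => 1 + min (j : ℕ) e)
      = ((e + 2) + d) + (((Finset.range e).sum fun j => j) + (d + 2) * e) := by
    rw [Fin.sum_univ_eq_sum_range (fun j => 1 + min j e) ((e+2)+d)]
    rw [Finset.sum_add_distrib, Finset.sum_const, Finset.card_range, smul_eq_mul, mul_one]
    congr 1
    have h3 : (e + 2) + d = e + (d + 2) := by omega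
    rw [h3, sum_min]
  have hsup : ((Finset.univ : Finset (Fin ((e+2)+d))).sup fun j => (j : ℕ) - e) = d + 1 := by
    apply le_antisymm
    · apply Finset.sup_le
      intro j _
      have := j.isLt
      omega
    · have hlt : (e + 1 + d) < (e + 2) + d := by omega
      have := Finset.le_sup (f := fun j : Fin ((e+2)+d) => (j : ℕ) - e)
        (Finset.mem_univ (⟨e + 1 + d, hlt⟩ : Fin ((e+2)+d)))
      simp at this
      omega
  rw [pot, hme, hsum, hsup]
  have hrhs : ((e + 2) + d - (e + 2) + 1) = d + 1 := by omega
  rw [hrhs]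
  have hs1 : (e + 2) - 1 = e + 1 := by omega
  rw [hs1]
  -- 2Σ + e = e*e
  have hgauss : ((Finset.range e).sum fun j => j) * 2 = e * (e - 1) := Finset.sum_range_id_mul_two e
  have hg2 : 2 * ((Finset.range e).sum fun j => j) + e = e * e := by
    cases e with
    | zero => simp
    | succ e' =>
      have h4 : (e' + 1) * ((e' + 1) - 1) = (e' + 1) * e' := by simp
      rw [h4] at hgauss
      have h5 : (e' + 1) * (e' + 1) = (e' + 1) * e' + (e' + 1) := by ring
      omega
  have key : 2 * ((((e + 2) + d) + (((Finset.range e).sum fun j => j) + (d + 2) * e)) + (d + 1))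
      = 2 * ((d + 1) * (e + 2)) + (e + 2) * (e + 1) := by
    zify
    zify at hg2
    linear_combination hg2
  have hhalf : (e + 2) * (e + 1) / 2 * 2 = (e + 2) * (e + 1) := by
    have heven : Even ((e + 1) * (e + 2)) := Nat.even_mul_succ_self (e + 1)
    obtain ⟨w, hw⟩ := heven
    have h6 : (e + 2) * (e + 1) = w + w := by rw [← hw]; ring
    omega
  omega

/-! ## generic cardinal bound (used for `m = 1`) -/

lemma card_step (S : Finset (Fin n)) (k : Fin m) :
    (stepF n m S k).card ≤ S.card + 1 := by
  apply le_trans (Finset.card_union_le _ _)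
  have h1 : (S.image (sg n m k)).card ≤ S.card := Finset.card_image_le
  have h2 : (if (k : ℕ) = 0 then Finset.univ.filter (fun j : Fin n => (j : ℕ) = 0) else ∅).card ≤ 1 := by
    split_ifs
    · apply Finset.card_le_one.2
      intro a ha b hb
      simp at ha hb
      exact Fin.ext (by omega)
    · simp
  omega

lemma card_run (π : List (Fin m)) :
    ∀ S : Finset (Fin n), (π.foldl (stepF n m) S).card ≤ S.card + π.length := by
  induction π with
  | nil => intro S; simp
  | cons k π ih =>
    intro S
    simp only [List.foldl_cons, List.length_cons]
    have h1 := ih (stepF n m S k)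
    have h2 := card_step S k
    omega

/-! ## the explicit controllable word -/

def mkF (m : ℕ) (hm : 0 < m) (s : ℕ) : Fin m := ⟨s % m, Nat.mod_lt _ hm⟩

lemma mkF_val {m : ℕ} (hm : 0 < m) {s : ℕ} (hs : s < m) : ((mkF m hm s : Fin m) : ℕ) = s :=
  Nat.mod_eq_of_lt hs

def carry (m : ℕ) (hm : 0 < m) (t : ℕ) : List (Fin m) := (List.range (t + 1)).map (mkF m hm)

def blocks (m : ℕ) (hm : 0 < m) : ℕ → List (Fin m)
  | 0 => []
  | (i + 1) => (mkF m hm (m - 1) :: carry m hm (m - 2)) ++ blocks m hm i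

def tailw (m : ℕ) (hm : 0 < m) : ℕ → List (Fin m)
  | 0 => []
  | (j + 1) => carry m hm j ++ tailw m hm j

def Wd (n m : ℕ) (hm : 0 < m) : List (Fin m) :=
  carry m hm (m - 2) ++ (blocks m hm (n - m + 1) ++ tailw m hm (m - 2))

/-- interval finsets -/
def Iv (n a b : ℕ) : Finset (Fin n) :=
  Finset.univ.filter (fun j : Fin n => a ≤ (j : ℕ) ∧ (j : ℕ) ≤ b)

lemma mem_Iv {n a b : ℕ} {j : Fin n} : j ∈ Iv n a b ↔ a ≤ (j : ℕ) ∧ (j : ℕ) ≤ b := by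
  simp [Iv]

lemma length_carry (m : ℕ) (hm : 0 < m) (t : ℕ) : (carry m hm t).length = t + 1 := by
  simp [carry]

lemma length_blocks (m : ℕ) (hm2 : 2 ≤ m) (hm : 0 < m) (i : ℕ) :
    (blocks m hm i).length = i * m := by
  induction i with
  | zero => simp [blocks]
  | succ i ih =>
    simp only [blocks, List.length_append, List.length_cons, length_carry, ih]
    have h9 : (i + 1) * m = i * m + m := by ring
    omega

lemma length_tailw (m : ℕ) (hm : 0 < m) (j : ℕ) :
    2 * (tailw m hm j).length = j * (j + 1) := by
  induction j with
  | zero => simp [tailw]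
  | succ j ih =>
    simp only [tailw, List.length_append, length_carry]
    have h9 : (j + 1) * (j + 1 + 1) = j * (j + 1) + 2 * (j + 1) := by ring
    omega

/-! running the word -/

lemma run_carry (hm2 : 2 ≤ m) (hmn : m ≤ n) (t : ℕ) (ht : t ≤ m - 2)
    (S : Finset (Fin n)) (hS : ∀ x ∈ S, t < (x : ℕ)) :
    List.foldl (stepF n m) S (carry m (by omega) t) = S ∪ Iv n t t := by
  have hn : 0 < n := by omega
  induction t with
  | zero =>
    show List.foldl (stepF n m) S [mkF m _ 0] = _
    have hk0 : ((mkF m (by omega) 0 : Fin m) : ℕ) = 0 := mkF_val _ (by omega)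
    simp only [List.foldl_cons, List.foldl_nil]
    rw [stepF, if_pos hk0]
    have hsg : ∀ j : Fin n, sg n m (mkF m (by omega) 0) j = j := by
      intro j
      apply Fin.ext
      rw [sg_val hmn]
      unfold pm
      rw [hk0]
      split_ifs <;> omega
    have himg : S.image (sg n m (mkF m (by omega) 0)) = S := by
      rw [show sg n m (mkF m (by omega) 0) = id from funext hsg, Finset.image_id]
    have hfil : (Finset.univ.filter (fun j : Fin n => (j : ℕ) = 0)) = Iv n 0 0 := by
      ext j
      simp only [Finset.mem_filter, Finset.mem_univ, true_and, mem_Iv]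
      omega
    rw [himg, hfil]
  | succ t ih =>
    have hS' : ∀ x ∈ S, t < (x : ℕ) := fun x hx => by have := hS x hx; omega
    have hcs : carry m (by omega : 0 < m) (t + 1)
        = carry m (by omega) t ++ [mkF m (by omega) (t + 1)] := by
      unfold carry
      rw [List.range_succ, List.map_append]
      rfl
    rw [hcs, List.foldl_append, ih (by omega) hS']
    simp only [List.foldl_cons, List.foldl_nil]
    have hkv : ((mkF m (by omega : 0 < m) (t + 1) : Fin m) : ℕ) = t + 1 := mkF_val _ (by omega)
    have hk0 : ¬ ((mkF m (by omega : 0 < m) (t + 1) : Fin m) : ℕ) = 0 := by omega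
    rw [stepF, if_neg hk0, Finset.union_empty]
    ext j
    rw [mem_image_sg hmn, Finset.mem_union, Finset.mem_union, mem_Iv, mem_Iv]
    have hq : ((sginv n m (mkF m (by omega) (t + 1)) j : Fin n) : ℕ) = qm m n (t + 1) (j : ℕ) := by
      rw [sginv_val hmn, hkv]
    have hj := j.isLt
    constructor
    · rintro (h | h)
      · -- sginv j ∈ S hence fixed
        have hgt := hS _ h
        rw [hq] at hgt
        have hvq : qm m n (t + 1) (j : ℕ) = (j : ℕ) := by
          unfold qm at hgt ⊢
          split_ifs at hgt ⊢ <;> first | omega | exact ‹False›.elim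
        have hfix : sginv n m (mkF m (by omega) (t + 1)) j = j :=
          Fin.ext (hq.trans hvq)
        rw [hfix] at h
        exact Or.inl h
      · -- sginv j at position t, so j at position t+1
        right
        rw [hq] at h
        unfold qm at h
        split_ifs at h <;> first | omega | exact ‹False›.elim
    · rintro (h | h)
      · -- j ∈ S, fixed
        have hgt := hS _ h
        have hvq : qm m n (t + 1) (j : ℕ) = (j : ℕ) := by
          unfold qm
          split_ifs <;> first | omega | exact ‹False›.elim
        have hfix : sginv n m (mkF m (by omega) (t + 1)) j = j :=
          Fin.ext (hq.trans hvq)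
        rw [hfix]
        exact Or.inl h
      · right
        rw [hq]
        unfold qm
        split_ifs <;> first | omega | exact ‹False›.elim

lemma run_rot (hm2 : 2 ≤ m) (hmn : m ≤ n) (b : ℕ) (hb1 : m - 2 ≤ b) (hb2 : b ≤ n - 2) :
    stepF n m (Iv n (m - 2) b) (mkF m (by omega) (m - 1)) = Iv n (m - 1) (b + 1) := by
  have hkv : ((mkF m (by omega : 0 < m) (m - 1) : Fin m) : ℕ) = m - 1 := mkF_val _ (by omega)
  have hk0 : ¬ ((mkF m (by omega : 0 < m) (m - 1) : Fin m) : ℕ) = 0 := by omega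
  rw [stepF, if_neg hk0, Finset.union_empty]
  ext j
  rw [mem_image_sg hmn, mem_Iv, mem_Iv]
  rw [sginv_val hmn, hkv]
  unfold qm
  have hj := j.isLt
  split_ifs <;> omega

lemma run_blocks (hm2 : 2 ≤ m) (hmn : m ≤ n) (i : ℕ) :
    ∀ b : ℕ, m - 2 ≤ b → b + i ≤ n - 1 →
    List.foldl (stepF n m) (Iv n (m - 2) b) (blocks m (by omega) i) = Iv n (m - 2) (b + i) := by
  induction i with
  | zero => intro b _ _; simp [blocks]
  | succ i ih =>
    intro b hb1 hbi
    show List.foldl (stepF n m)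
      (Iv n (m - 2) b) ((mkF m _ (m - 1) :: carry m _ (m - 2)) ++ blocks m _ i) = _
    rw [List.foldl_append]
    simp only [List.foldl_cons]
    rw [run_rot hm2 hmn b hb1 (by omega)]
    have hcar : List.foldl (stepF n m) (Iv n (m - 1) (b + 1)) (carry m (by omega) (m - 2))
        = Iv n (m - 1) (b + 1) ∪ Iv n (m - 2) (m - 2) :=
      run_carry hm2 hmn (m - 2) le_rfl _ (by
        intro x hx
        exact (mem_Iv.1 hx).1.trans_lt' (by omega))
    have hins : Iv n (m - 1) (b + 1) ∪ Iv n (m - 2) (m - 2) = Iv n (m - 2) (b + 1) := by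
      ext j
      simp only [Finset.mem_union, mem_Iv]
      omega
    rw [hcar, hins]
    have hrun := ih (b + 1) (by omega) (by omega)
    rw [hrun]
    congr 1
    omega

lemma run_tailw (hm2 : 2 ≤ m) (hmn : m ≤ n) (j : ℕ) (hj : j ≤ m - 2) :
    List.foldl (stepF n m) (Iv n j (n - 1)) (tailw m (by omega) j) = Iv n 0 (n - 1) := by
  induction j with
  | zero => simp [tailw]
  | succ j ih =>
    show List.foldl (stepF n m) _ (carry m _ j ++ tailw m _ j) = _
    rw [List.foldl_append]
    have hcar : List.foldl (stepF n m) (Iv n (j + 1) (n - 1)) (carry m (by omega) j)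
        = Iv n (j + 1) (n - 1) ∪ Iv n j j :=
      run_carry hm2 hmn j (by omega) _ (by
        intro x hx
        exact (mem_Iv.1 hx).1.trans_lt' (by omega))
    have hins : Iv n (j + 1) (n - 1) ∪ Iv n j j = Iv n j (n - 1) := by
      ext x
      simp only [Finset.mem_union, mem_Iv]
      have := x.isLt
      omega
    rw [hcar, hins]
    exact ih (by omega)

lemma run_Wd (hm2 : 2 ≤ m) (hmn : m ≤ n) :
    List.foldl (stepF n m) ∅ (Wd n m (by omega)) = Finset.univ := by
  have hn : 0 < n := by omega
  rw [Wd, List.foldl_append, List.foldl_append]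
  have h1 : List.foldl (stepF n m) ∅ (carry m (by omega : 0 < m) (m - 2))
      = ∅ ∪ Iv n (m - 2) (m - 2) :=
    run_carry hm2 hmn (m - 2) le_rfl ∅ (by simp)
  have h2 : (∅ : Finset (Fin n)) ∪ Iv n (m - 2) (m - 2) = Iv n (m - 2) (m - 2) :=
    Finset.empty_union _
  rw [h1, h2]
  rw [run_blocks hm2 hmn (n - m + 1) (m - 2) le_rfl (by omega)]
  have h3 : m - 2 + (n - m + 1) = n - 1 := by omega
  rw [h3]
  rw [run_tailw hm2 hmn (m - 2) le_rfl]
  ext j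
  simp only [mem_Iv, Finset.mem_univ, iff_true]
  have := j.isLt
  omega

lemma length_Wd (hm2 : 2 ≤ m) (hmn : m ≤ n) :
    (Wd n m (by omega : 0 < m)).length = (n - m + 1) * m + m * (m - 1) / 2 := by
  rw [Wd]
  simp only [List.length_append, length_carry]
  have hb : (blocks m (by omega : 0 < m) (n - m + 1)).length = (n - m + 1) * m :=
    length_blocks m hm2 _ _
  have ht : 2 * (tailw m (by omega : 0 < m) (m - 2)).length = (m - 2) * (m - 2 + 1) :=
    length_tailw m _ _
  have hrel : m * (m - 1) = (m - 2) * (m - 2 + 1) + 2 * (m - 1) := by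
    obtain ⟨e, rfl⟩ : ∃ e, m = e + 2 := ⟨m - 2, by omega⟩
    have h1 : (e + 2) - 1 = e + 1 := by omega
    have h2 : (e + 2) - 2 = e := by omega
    rw [h1, h2]
    ring
  omega

/-! the `m = 1` word -/

lemma run_one (hm1 : m = 1) (hmn : 1 ≤ n) :
    ∀ k : ℕ, k ≤ n →
      List.foldl (stepF n m) ∅ (List.replicate k (mkF m (by omega) 0))
        = Finset.univ.filter (fun j : Fin n => (j : ℕ) < k) := by
  intro k
  induction k with
  | zero =>
    intro _
    ext j
    simp
  | succ k ih =>
    intro hk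
    have hrep : List.replicate (k + 1) (mkF m (by omega : 0 < m) 0)
        = List.replicate k (mkF m (by omega) 0) ++ [mkF m (by omega) 0] := by
      rw [List.replicate_succ' ]
    rw [hrep, List.foldl_append, ih (by omega)]
    simp only [List.foldl_cons, List.foldl_nil]
    have hk0 : ((mkF m (by omega : 0 < m) 0 : Fin m) : ℕ) = 0 := mkF_val _ (by omega)
    rw [stepF, if_pos hk0]
    ext j
    rw [Finset.mem_union]
    rw [mem_image_sg (by omega : m ≤ n)]
    simp only [Finset.mem_filter, Finset.mem_univ, true_and]
    rw [sginv_val (by omega), hk0]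
    unfold qm
    have hj := j.isLt
    split_ifs <;> omega

end S18

/-- Degenerate case: for `1 ≤ m ≤ n` there is a controllable system (with possibly
singular `A_i`) whose shortest controllable sequences have length exactly
`(n-m+1)m + m(m-1)/2`. -/
theorem stmt18 (n m : ℕ) (hm : 1 ≤ m) (hmn : m ≤ n) :
    ∃ (A : Fin m → Matrix (Fin n) (Fin n) ℝ) (B : Fin m → Matrix (Fin n) (Fin 1) ℝ),
      (⋃ π : List (Fin m), (reach A B π : Set (Fin n → ℝ))) = Set.univ ∧
      (∃ π : List (Fin m), reach A B π = ⊤ ∧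
        π.length = (n - m + 1) * m + m * (m - 1) / 2) ∧
      (∀ π : List (Fin m), reach A B π = ⊤ →
        (n - m + 1) * m + m * (m - 1) / 2 ≤ π.length) := by
  have hn : 0 < n := by omega
  have hm0 : 0 < m := hm
  refine ⟨S18.Am n m, S18.Bm n m, ?_, ?_, ?_⟩
  case refine_2 =>
    rcases eq_or_lt_of_le hm with hm1 | hm2
    · -- m = 1
      refine ⟨List.replicate n (S18.mkF m hm0 0), ?_, ?_⟩
      · rw [S18.reach_top_iff hm hmn]
        have hrun := S18.run_one hm1.symm (by omega) n le_rfl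
        rw [hrun]
        ext j
        simp [j.isLt]
      · rw [List.length_replicate]
        subst hm1
        simp
        omega
    · -- 2 ≤ m
      refine ⟨S18.Wd n m hm0, ?_, ?_⟩
      · rw [S18.reach_top_iff hm hmn]
        exact S18.run_Wd hm2 hmn
      · exact S18.length_Wd hm2 hmn
  case refine_1 =>
    -- union of all reachable spaces is everything; use the controllable word
    have hex : ∃ π : List (Fin m), reach (S18.Am n m) (S18.Bm n m) π = ⊤ := by
      rcases eq_or_lt_of_le hm with hm1 | hm2
      · refine ⟨List.replicate n (S18.mkF m hm0 0), ?_⟩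
        rw [S18.reach_top_iff hm hmn]
        have hrun := S18.run_one hm1.symm (by omega) n le_rfl
        rw [hrun]
        ext j
        simp [j.isLt]
      · refine ⟨S18.Wd n m hm0, ?_⟩
        rw [S18.reach_top_iff hm hmn]
        exact S18.run_Wd hm2 hmn
    obtain ⟨π₀, hπ₀⟩ := hex
    apply Set.eq_univ_iff_forall.2
    intro x
    apply Set.mem_iUnion.2
    refine ⟨π₀, ?_⟩
    rw [hπ₀]
    trivial
  case refine_3 =>
    intro π hπ
    rw [S18.reach_top_iff hm hmn] at hπ
    rcases eq_or_lt_of_le hm with hm1 | hm2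
    · -- m = 1 : use the cardinality bound
      have hc := S18.card_run (n := n) (m := m) π ∅
      rw [hπ] at hc
      rw [Finset.card_univ, Fintype.card_fin, Finset.card_empty] at hc
      subst hm1
      simp only [Nat.mul_one, Nat.sub_self, Nat.zero_div, Nat.mul_zero]
      omega
    · have h1 := S18.pot_run hm2 hmn π ∅
      rw [hπ, S18.pot_univ hm2 hmn, S18.pot_empty] at h1
      omega
end

section
/- For all integers n, r, m with r ≥ 1 and 1 ≤ m ≤ n - r, there exist matrices A_1,…,A_m ∈ ℝ^{n×n} (not necessarily invertible) and B_1,…,B_m ∈ ℝ^{n×r} each of rank r such that the associated switched linear control system is controllable, there exists a controllable switching sequence of length m(2n - m - 2r + 1)/2 + 1, and no controllable switching sequence has length strictly smaller than m(2n - m - 2r + 1)/2 + 1. -/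
namespace Stmt19Aux
open Finset

/-! ### Combinatorial layer -/

/-- Mode-`c` transition on cell values (cells `0..N`, `0` = base, output `0` = dead/base). -/
def sig (m N c t : ℕ) : ℕ :=
  if c = m then (if m - 1 ≤ t then min (t + 1) N else 0)
  else if t + 1 = c then c else if c < t then t else 0

def mu (m t : ℕ) : ℕ := min t (m - 1)

def tauv (m N c : ℕ) (X : Finset ℕ) : Finset ℕ := insert 0 (X.image (sig m N c))

def Psi (m : ℕ) (X : Finset ℕ) : ℕ :=
  (if X = ∅ then 0 else 1) + (∑ t ∈ X, mu m t) + (X.sup id - (m - 1))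

def stepv (m N : ℕ) (X : Finset ℕ) (i : Fin m) : Finset ℕ := tauv m N (i + 1) X

lemma sig_le_N {m N c t : ℕ} (hmN : m ≤ N) (ht : t ≤ N) (hc : c ≤ m) :
    sig m N c t ≤ N := by
  unfold sig; split_ifs <;> omega

lemma sum_image_le_comp (X : Finset ℕ) (f g : ℕ → ℕ) :
    ∑ y ∈ X.image f, g y ≤ ∑ t ∈ X, g (f t) := by
  induction X using Finset.induction with
  | empty => simp
  | @insert a X ha ih =>
    rw [Finset.image_insert, Finset.sum_insert ha]
    by_cases h : f a ∈ X.image f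
    · rw [Finset.insert_eq_self.2 h]; omega
    · rw [Finset.sum_insert h]; omega

lemma psi_step (m N : ℕ) (hm : 1 ≤ m) (hmN : m ≤ N) (c : ℕ) (hc1 : 1 ≤ c) (hcm : c ≤ m)
    (X : Finset ℕ) (hX : ∀ t ∈ X, t ≤ N) :
    Psi m (tauv m N c X) ≤ Psi m X + 1 := by
  by_cases hE : X = ∅
  · subst hE
    simp [tauv, Psi, mu]
  have h1 : ∑ y ∈ insert 0 (X.image (sig m N c)), mu m y ≤ ∑ y ∈ X.image (sig m N c), mu m y := by
    by_cases h0 : (0:ℕ) ∈ X.image (sig m N c)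
    · rw [Finset.insert_eq_self.2 h0]
    · rw [Finset.sum_insert h0]; simp [mu]
  have h2 : ∑ y ∈ X.image (sig m N c), mu m y ≤ ∑ t ∈ X, mu m (sig m N c t) :=
    sum_image_le_comp _ _ _
  have h3 : ∀ t ∈ X, mu m (sig m N c t) ≤ mu m t + (if t = c - 1 ∧ c ≠ m then 1 else 0) := by
    intro t ht
    have := hX t ht
    unfold mu sig; split_ifs <;> omega
  have h4 : ∑ t ∈ X, (mu m t + (if t = c - 1 ∧ c ≠ m then 1 else 0))
      = (∑ t ∈ X, mu m t) + ∑ t ∈ X, (if t = c - 1 ∧ c ≠ m then 1 else 0) :=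
    Finset.sum_add_distrib
  have h5 : ∑ t ∈ X, (if t = c - 1 ∧ c ≠ m then 1 else 0) ≤ (if c ≠ m then 1 else 0) := by
    by_cases hcne : c ≠ m
    · have step1 : ∑ t ∈ X, (if t = c - 1 ∧ c ≠ m then (1:ℕ) else 0)
          ≤ ∑ t ∈ X, (if t = c - 1 then (1:ℕ) else 0) := by
        apply Finset.sum_le_sum; intro t _; split_ifs <;> simp_all
      have step2 : ∑ t ∈ X, (if t = c - 1 then (1:ℕ) else 0) = if c - 1 ∈ X then 1 else 0 :=
        Finset.sum_ite_eq' X (c-1) (fun _ => 1)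
      rw [step2] at step1
      split_ifs at step1 ⊢ <;> omega
    · have hcm2 : ∀ t:ℕ, (t = c - 1 ∧ c ≠ m) = False := by
        intro t; simp only [eq_iff_iff, iff_false]; intro h; exact h.2 (by omega)
      simp only [hcm2, if_false]
      split_ifs <;> simp
  have hsum : ∑ y ∈ tauv m N c X, mu m y
      ≤ (∑ t ∈ X, mu m t) + (if c ≠ m then 1 else 0) := by
    have := Finset.sum_le_sum h3
    unfold tauv
    omega
  have hsup : (tauv m N c X).sup id ≤ (m - 1) + (X.sup id - (m-1)) + (if c = m then 1 else 0) := by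
    apply Finset.sup_le
    intro y hy
    rw [tauv, Finset.mem_insert] at hy
    rcases hy with rfl | hy
    · simp only [id_eq]; omega
    · obtain ⟨t, ht, rfl⟩ := Finset.mem_image.1 hy
      have h6 : t ≤ X.sup id := Finset.le_sup (f := id) ht
      simp only [id] at h6 ⊢
      unfold sig; split_ifs <;> omega
  have hsup2 : (tauv m N c X).sup id - (m-1) ≤ (X.sup id - (m-1)) + (if c = m then 1 else 0) := by
    omega
  have hne : (tauv m N c X) ≠ ∅ := by
    unfold tauv; exact Finset.insert_ne_empty _ _
  have hi : (if c ≠ m then (1:ℕ) else 0) + (if c = m then 1 else 0) = 1 := by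
    split_ifs with h1' h2' <;> simp_all
  unfold Psi
  rw [if_neg hne, if_neg hE]
  omega

lemma psi_mono (m : ℕ) {X Y : Finset ℕ} (h : X ⊆ Y) : Psi m X ≤ Psi m Y := by
  unfold Psi
  have h1 := Finset.sum_le_sum_of_subset (f := mu m) h
  have h2 := Finset.sup_mono (f := id) h
  have h3 : X = ∅ ∨ Y ≠ ∅ := by
    rcases Finset.eq_empty_or_nonempty X with hX | hX
    · exact Or.inl hX
    · exact Or.inr fun hY => by simp [hY] at h; simp [h] at hX
  rcases h3 with h3 | h3
  · subst h3
    simp only [Finset.sum_empty, Finset.sup_empty, if_pos rfl, Nat.bot_eq_zero]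
    split_ifs <;> omega
  · rw [if_neg h3]; split_ifs <;> omega

lemma psi_empty (m : ℕ) : Psi m ∅ = 0 := by
  simp [Psi]

lemma psi_Icc (m d : ℕ) (hm : 1 ≤ m) :
    Psi m (Finset.Icc 1 (m + d)) * 2 = 2 + m * (2 * (m + d) - m + 1) := by
  obtain ⟨e, rfl⟩ : ∃ e, m = e + 1 := ⟨m - 1, by omega⟩
  set B := ∑ t ∈ Finset.Icc 1 e, t with hB
  have h2B : B * 2 = (e + 1) * e := by
    have hG := Finset.sum_range_id_mul_two (e + 1)
    rw [Nat.add_sub_cancel] at hG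
    have hr : Finset.range (e + 1) = Finset.Icc 0 e := by
      rw [Nat.range_eq_Icc_zero_sub_one _ (by omega)]; norm_num
    have h0 : Finset.Icc 0 e = insert 0 (Finset.Icc 1 e) :=
      (Finset.insert_Icc_add_one_left_eq_Icc (by omega)).symm
    rw [hr, h0, Finset.sum_insert (by simp)] at hG
    omega
  have hbase : ∑ t ∈ Finset.Icc 1 (e + 1), mu (e + 1) t = B + e := by
    have hins : Finset.Icc 1 (e + 1) = insert (e + 1) (Finset.Icc 1 e) := by
      rw [Finset.insert_Icc_right_eq_Icc_add_one (by omega)]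
    rw [hins, Finset.sum_insert (by simp)]
    have hsc : ∑ t ∈ Finset.Icc 1 e, mu (e + 1) t = ∑ t ∈ Finset.Icc 1 e, t := by
      apply Finset.sum_congr rfl
      intro t ht
      have := (Finset.mem_Icc.1 ht).2
      unfold mu; omega
    rw [hsc, ← hB]
    have : mu (e + 1) (e + 1) = e := by unfold mu; omega
    omega
  have hsum : ∀ d : ℕ, ∑ t ∈ Finset.Icc 1 (e + 1 + d), mu (e + 1) t = B + e + d * e := by
    intro d
    induction d with
    | zero => simpa using hbase
    | succ d ih =>
      have hins : Finset.Icc 1 (e + 1 + (d + 1))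
          = insert (e + 1 + d + 1) (Finset.Icc 1 (e + 1 + d)) := by
        rw [show e + 1 + (d + 1) = (e + 1 + d) + 1 by ring, Finset.insert_Icc_right_eq_Icc_add_one (by omega)]
      rw [hins, Finset.sum_insert (by simp), ih]
      have h1 : mu (e + 1) (e + 1 + d + 1) = e := by unfold mu; omega
      have h2 : (d + 1) * e = d * e + e := by ring
      omega
  have hsup : (Finset.Icc 1 (e + 1 + d)).sup id = e + 1 + d := by
    apply le_antisymm
    · apply Finset.sup_le; intro t ht; exact (Finset.mem_Icc.1 ht).2
    · exact Finset.le_sup (f := id) (Finset.mem_Icc.2 ⟨by omega, le_refl _⟩)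
  have hne : Finset.Icc 1 (e + 1 + d) ≠ ∅ := by
    apply Finset.Nonempty.ne_empty
    exact ⟨1, Finset.mem_Icc.2 ⟨le_refl _, by omega⟩⟩
  unfold Psi
  rw [if_neg hne, hsum, hsup]
  have harith : 2 * (e + 1 + d) - (e + 1) + 1 = e + 2 * d + 2 := by omega
  rw [harith]
  have hgoal : (1 + (B + e + d * e) + (e + 1 + d - (e + 1 - 1))) = B + e + d * e + d + 2 := by
    omega
  rw [hgoal]
  zify at h2B ⊢
  linear_combination h2B

lemma tauv_le_N {m N c : ℕ} (hmN : m ≤ N) (hc : c ≤ m) {X : Finset ℕ}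
    (hX : ∀ t ∈ X, t ≤ N) : ∀ t ∈ tauv m N c X, t ≤ N := by
  intro t ht
  rcases Finset.mem_insert.1 ht with rfl | ht
  · omega
  · obtain ⟨u, hu, rfl⟩ := Finset.mem_image.1 ht
    exact sig_le_N hmN (hX u hu) hc

lemma foldl_le_N {m N : ℕ} (hmN : m ≤ N) :
    ∀ (π : List (Fin m)) (X : Finset ℕ), (∀ t ∈ X, t ≤ N) →
      ∀ t ∈ π.foldl (stepv m N) X, t ≤ N := by
  intro π
  induction π with
  | nil => intro X hX; simpa using hX
  | cons i π ih =>
    intro X hX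
    rw [List.foldl_cons]
    exact ih _ (tauv_le_N hmN (by omega) hX)

lemma psi_foldl {m N : ℕ} (hm : 1 ≤ m) (hmN : m ≤ N) :
    ∀ (π : List (Fin m)) (X : Finset ℕ), (∀ t ∈ X, t ≤ N) →
      Psi m (π.foldl (stepv m N) X) ≤ Psi m X + π.length := by
  intro π
  induction π with
  | nil => intro X _; simp
  | cons i π ih =>
    intro X hX
    rw [List.foldl_cons, List.length_cons]
    have h1 := ih (stepv m N X i) (tauv_le_N hmN (by omega) hX)
    have h2 := psi_step m N hm hmN ((i:ℕ)+1) (by omega) (by omega) X hX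
    show Psi m (π.foldl (stepv m N) (stepv m N X i)) ≤ Psi m X + (π.length + 1)
    have : Psi m (stepv m N X i) ≤ Psi m X + 1 := h2
    omega

lemma finRange_decomp (m j : ℕ) (h : j < m) :
    (List.finRange m).take (j + 1) = (List.finRange m).take j ++ [⟨j, h⟩] := by
  rw [List.take_succ]
  congr 1
  rw [List.getElem?_eq_getElem (by simpa using h)]
  simp [List.getElem_finRange]

lemma fold_take {m N : ℕ} (hmN : m ≤ N) :
    ∀ (j : ℕ), j ≤ m - 1 → ∀ (X : Finset ℕ), (∀ t ∈ X, j + 1 ≤ t ∧ t ≤ N) →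
    ((List.finRange m).take j).foldl (stepv m N) (insert 0 X) = insert 0 (insert j X) := by
  intro j
  induction j with
  | zero =>
    intro _ X hX
    simp only [List.take_zero, List.foldl_nil]
    rw [Finset.insert_eq_self.2 (Finset.mem_insert_self 0 X)]
  | succ j ih =>
    intro hj X hX
    have hjm : j < m := by omega
    rw [finRange_decomp m j hjm, List.foldl_append]
    rw [ih (by omega) X (fun t ht => ⟨by have := (hX t ht).1; omega, (hX t ht).2⟩)]
    show tauv m N (j + 1) (insert 0 (insert j X)) = insert 0 (insert (j + 1) X)
    have hone : sig m N (j + 1) j = j + 1 := by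
      unfold sig; split_ifs <;> omega
    have hzero : sig m N (j + 1) 0 = 0 ∨ sig m N (j + 1) 0 = j + 1 := by
      unfold sig; split_ifs <;> omega
    have hkeep : ∀ t ∈ X, sig m N (j + 1) t = t := by
      intro t ht
      have h1 := (hX t ht).1
      unfold sig; split_ifs <;> omega
    apply Finset.ext
    intro a
    simp only [tauv, Finset.mem_insert, Finset.mem_image]
    constructor
    · rintro (rfl | ⟨t, ht, rfl⟩)
      · exact Or.inl rfl
      · rcases ht with rfl | rfl | ht
        · rcases hzero with h | h
          · rw [h]; exact Or.inl rfl
          · rw [h]; exact Or.inr (Or.inl rfl)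
        · rw [hone]; exact Or.inr (Or.inl rfl)
        · rw [hkeep t ht]; exact Or.inr (Or.inr ht)
    · rintro (rfl | rfl | ha)
      · exact Or.inl rfl
      · exact Or.inr ⟨j, Or.inr (Or.inl rfl), hone⟩
      · exact Or.inr ⟨a, Or.inr (Or.inr ha), hkeep a ha⟩

lemma fold_block {m N : ℕ} (hm : 1 ≤ m) (hmN : m ≤ N) (s : ℕ) (hs : m + s ≤ N) :
    (List.finRange m).foldl (stepv m N) (insert 0 (Finset.Icc m (m - 1 + s)))
      = insert 0 (Finset.Icc m (m + s)) := by
  have hm1 : m - 1 + 1 = m := by omega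
  have hm1m : m - 1 < m := by omega
  have htake := finRange_decomp m (m - 1) hm1m
  rw [hm1] at htake
  rw [show ((List.finRange m).take m) = List.finRange m by simp] at htake
  rw [htake, List.foldl_append]
  rw [fold_take hmN (m - 1) (le_refl _) _
    (fun t ht => by have := Finset.mem_Icc.1 ht; omega)]
  show tauv m N (m - 1 + 1) (insert 0 (insert (m - 1) (Finset.Icc m (m - 1 + s))))
      = insert 0 (Finset.Icc m (m + s))
  rw [hm1]
  apply Finset.ext
  intro a
  simp only [tauv, Finset.mem_insert, Finset.mem_image, Finset.mem_Icc]
  constructor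
  · rintro (rfl | ⟨t, ht, rfl⟩)
    · exact Or.inl rfl
    · rcases ht with rfl | rfl | ht
      · unfold sig; split_ifs <;> omega
      · unfold sig; split_ifs <;> omega
      · unfold sig; split_ifs <;> omega
  · rintro (rfl | ha)
    · exact Or.inl rfl
    · by_cases haa : a = m
      · refine Or.inr ⟨m - 1, Or.inr (Or.inl rfl), ?_⟩
        unfold sig; split_ifs <;> omega
      · refine Or.inr ⟨a - 1, Or.inr (Or.inr ⟨by omega, by omega⟩), ?_⟩
        unfold sig; split_ifs <;> omega

lemma fold_blocks {m N : ℕ} (hm : 1 ≤ m) (hmN : m ≤ N) :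
    ∀ s : ℕ, s ≤ N - m + 1 →
    ((List.replicate s (List.finRange m)).flatten).foldl (stepv m N) {0}
      = insert 0 (Finset.Icc m (m - 1 + s)) := by
  intro s
  induction s with
  | zero =>
    intro _
    rw [Finset.Icc_eq_empty (by omega)]
    rfl
  | succ s ih =>
    intro hs
    rw [List.replicate_succ', List.flatten_append, List.foldl_append, ih (by omega)]
    simp only [List.flatten, List.flatten_nil, List.append_eq, List.append_nil]
    rw [fold_block hm hmN s (by omega)]
    congr 2
    omega

lemma fold_tails {m N : ℕ} (hm : 1 ≤ m) (hmN : m ≤ N) :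
    ∀ k : ℕ, k ≤ m - 1 →
    (((List.range k).map (fun t => (List.finRange m).take (m - 1 - t))).flatten).foldl
      (stepv m N) (insert 0 (Finset.Icc m N)) = insert 0 (Finset.Icc (m - k) N) := by
  intro k
  induction k with
  | zero => intro _; simp
  | succ k ih =>
    intro hk
    rw [List.range_succ, List.map_append, List.flatten_append, List.foldl_append, ih (by omega)]
    simp only [List.map_cons, List.map_nil, List.flatten, List.flatten_nil, List.append_eq, List.append_nil]
    rw [fold_take hmN (m - 1 - k) (by omega) _
      (fun t ht => by have := Finset.mem_Icc.1 ht; omega)]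
    congr 1
    rw [show m - 1 - k = m - (k + 1) by omega]
    rw [show Finset.Icc (m - k) N = Finset.Icc (m - (k + 1) + 1) N by congr 1; omega]
    exact Finset.insert_Icc_add_one_left_eq_Icc (by omega)

def word (m N : ℕ) : List (Fin m) :=
  (List.finRange m).take 1 ++ (List.replicate (N - m + 1) (List.finRange m)).flatten
    ++ ((List.range (m - 1)).map (fun t => (List.finRange m).take (m - 1 - t))).flatten

lemma word_fold {m N : ℕ} (hm : 1 ≤ m) (hmN : m ≤ N) :
    (word m N).foldl (stepv m N) ∅ = insert 0 (Finset.Icc 1 N) := by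
  unfold word
  rw [List.foldl_append, List.foldl_append]
  have h1 : ((List.finRange m).take 1).foldl (stepv m N) ∅ = {0} := by
    have h0m : (0:ℕ) < m := hm
    have ht1 : (List.finRange m).take 1 = [⟨0, h0m⟩] := by
      have := finRange_decomp m 0 h0m
      simpa using this
    rw [ht1]
    simp only [List.foldl_cons, List.foldl_nil]
    show tauv m N (0 + 1) ∅ = {0}
    simp [tauv]
  rw [h1, fold_blocks hm hmN _ (le_refl _)]
  rw [show m - 1 + (N - m + 1) = N by omega]
  rw [fold_tails hm hmN _ (le_refl _)]
  congr 2
  omega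

lemma tails_len {m : ℕ} (hm : 1 ≤ m) :
    ∀ k, k ≤ m - 1 →
    (((List.range k).map (fun t => (List.finRange m).take (m - 1 - t))).flatten).length * 2
      + (m - 1 - k) * (m - 1 - k + 1) = (m - 1) * m := by
  intro k
  induction k with
  | zero =>
    intro _
    simp only [List.range_zero, List.map_nil, List.flatten_nil, List.length_nil, Nat.zero_mul,
      Nat.sub_zero, Nat.zero_add]
    congr 1
    omega
  | succ k ih =>
    intro hk
    rw [List.range_succ, List.map_append, List.flatten_append, List.length_append]
    simp only [List.map_cons, List.map_nil, List.flatten, List.flatten_nil, List.append_eq, List.append_nil,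
      List.length_take, List.length_finRange]
    have ihh := ih (by omega)
    obtain ⟨b, hb⟩ : ∃ b, m - 1 - k = b + 1 := ⟨m - 2 - k, by omega⟩
    rw [show min (m - 1 - k) m = b + 1 by omega, show m - 1 - (k + 1) = b by omega]
    rw [hb] at ihh
    zify at ihh ⊢
    linear_combination ihh

lemma word_len {m N : ℕ} (hm : 1 ≤ m) (hmN : m ≤ N) :
    (word m N).length * 2 = 2 + m * (2 * N - m + 1) := by
  unfold word
  rw [List.length_append, List.length_append]
  have l1 : ((List.finRange m).take 1).length = 1 := by
    simp only [List.length_take, List.length_finRange]; omega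
  have l2 : ((List.replicate (N - m + 1) (List.finRange m)).flatten).length = (N - m + 1) * m := by
    simp [List.length_flatten, List.map_replicate, List.sum_replicate, Nat.smul_one_eq_cast]
  have l3 := tails_len hm (m - 1) (le_refl _)
  rw [Nat.sub_self] at l3
  simp only [Nat.zero_mul] at l3
  rw [l1, l2]
  obtain ⟨d, rfl⟩ : ∃ d, N = m + d := ⟨N - m, by omega⟩
  obtain ⟨e, rfl⟩ : ∃ e, m = e + 1 := ⟨m - 1, by omega⟩
  simp only [show (e + 1) - 1 = e from by omega] at l3 ⊢
  rw [show (e + 1) + d - (e + 1) + 1 = d + 1 by omega,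
    show 2 * ((e + 1) + d) - (e + 1) + 1 = e + 2 * d + 2 by omega]
  zify at l3 ⊢
  linear_combination l3

end Stmt19Aux

namespace Stmt19Aux
open Finset Matrix

/-! ### Linear algebra layer -/

noncomputable def efun (n : ℕ) : Fin n → (Fin n → ℝ) := fun j => Pi.single j 1

def cf (n r : ℕ) (h1 : 1 ≤ r) (h2 : r < n) (t : ℕ) : Fin n :=
  ⟨r + min t (n - r) - 1, by omega⟩

def gmf (n m r : ℕ) (h1 : 1 ≤ r) (h2 : r < n) (i : Fin m) (b : Fin n) : Fin n :=
  cf n r h1 h2 (sig m (n - r) ((i : ℕ) + 1) ((b : ℕ) + 1 - r))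

noncomputable def Amat (n m r : ℕ) (h1 : 1 ≤ r) (h2 : r < n) (i : Fin m) :
    Matrix (Fin n) (Fin n) ℝ :=
  Matrix.of fun a b => if a = gmf n m r h1 h2 i b then 1 else 0

noncomputable def Bmat (n r : ℕ) : Matrix (Fin n) (Fin r) ℝ :=
  Matrix.of fun a j => if (a : ℕ) = (j : ℕ) then 1 else 0

def baseF (n r : ℕ) (h2 : r < n) : Finset (Fin n) :=
  (Finset.univ : Finset (Fin r)).image (Fin.castLE h2.le)

lemma Amat_col (n m r : ℕ) (h1 : 1 ≤ r) (h2 : r < n) (i : Fin m) (b : Fin n) :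
    (Amat n m r h1 h2 i).mulVecLin (efun n b) = efun n (gmf n m r h1 h2 i b) := by
  rw [Matrix.mulVecLin_apply]
  show (Amat n m r h1 h2 i).mulVec (Pi.single b 1) = _
  rw [Matrix.mulVec_single]
  funext a
  simp only [Amat, Matrix.of_apply, mul_one, efun, Pi.single_apply, Pi.smul_apply,
    MulOpposite.op_one, one_smul, Matrix.col, Matrix.transpose_apply]

lemma Bmat_col (n r : ℕ) (h2 : r < n) (j : Fin r) :
    (Bmat n r)ᵀ j = efun n (Fin.castLE h2.le j) := by
  funext a
  simp only [Bmat, Matrix.transpose_apply, Matrix.of_apply, efun, Pi.single_apply]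
  have hiff : (a = Fin.castLE h2.le j) ↔ ((a : ℕ) = (j : ℕ)) := by
    rw [Fin.ext_iff]; simp
  by_cases h : (a : ℕ) = (j : ℕ)
  · rw [if_pos h, if_pos (hiff.2 h)]
  · rw [if_neg h, if_neg (fun hh => h (hiff.1 hh))]

lemma Bmat_range (n r : ℕ) (h2 : r < n) :
    LinearMap.range (Bmat n r).mulVecLin
      = Submodule.span ℝ (efun n '' ↑(baseF n r h2)) := by
  rw [Matrix.range_mulVecLin]
  congr 1
  have h1 : Set.range (Bmat n r)ᵀ = Set.range (efun n ∘ Fin.castLE h2.le) := by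
    have hfun : (Bmat n r)ᵀ = efun n ∘ Fin.castLE h2.le := funext (Bmat_col n r h2)
    rw [hfun]
  rw [show (Bmat n r).col = (Bmat n r)ᵀ from rfl, h1, Set.range_comp, baseF, Finset.coe_image, Finset.coe_univ, Set.image_univ]

lemma span_step (n m r : ℕ) (h1 : 1 ≤ r) (h2 : r < n) (i : Fin m) (S : Finset (Fin n)) :
    Submodule.map (Amat n m r h1 h2 i).mulVecLin (Submodule.span ℝ (efun n '' ↑S))
        ⊔ LinearMap.range (Bmat n r).mulVecLin
      = Submodule.span ℝ (efun n '' ↑(S.image (gmf n m r h1 h2 i) ∪ baseF n r h2)) := by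
  rw [Submodule.map_span, Bmat_range n r h2, ← Submodule.span_union]
  congr 1
  rw [Finset.coe_union, Finset.coe_image, Set.image_union]
  congr 1
  rw [Set.image_image, Set.image_image]
  exact Set.image_congr fun b _ => Amat_col n m r h1 h2 i b

lemma reach_eq (n m r : ℕ) (h1 : 1 ≤ r) (h2 : r < n) (π : List (Fin m)) :
    reach (Amat n m r h1 h2) (fun _ => Bmat n r) π
      = Submodule.span ℝ (efun n ''
          ↑(π.foldl (fun S i => S.image (gmf n m r h1 h2 i) ∪ baseF n r h2) ∅)) := by
  induction π using List.reverseRecOn with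
  | nil =>
    simp only [reach, List.foldl_nil, Finset.coe_empty, Set.image_empty, Submodule.span_empty]
  | append_singleton π i ih =>
    have hstep : reach (Amat n m r h1 h2) (fun _ => Bmat n r) (π ++ [i])
        = Submodule.map (Amat n m r h1 h2 i).mulVecLin
            (reach (Amat n m r h1 h2) (fun _ => Bmat n r) π)
          ⊔ LinearMap.range (Bmat n r).mulVecLin := by
      simp only [reach, List.foldl_concat]
    rw [hstep, ih, List.foldl_concat, span_step]

lemma span_basis_univ (n : ℕ) :
    Submodule.span ℝ (efun n '' ↑(Finset.univ : Finset (Fin n))) = ⊤ := by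
  rw [Finset.coe_univ, Set.image_univ]
  have hb := (Pi.basisFun ℝ (Fin n)).span_eq
  have he : ⇑(Pi.basisFun ℝ (Fin n)) = efun n := by
    funext j
    rw [Pi.basisFun_apply]
    rfl
  rwa [he] at hb

lemma univ_of_span (n : ℕ) (S : Finset (Fin n))
    (hS : Submodule.span ℝ (efun n '' ↑S) = ⊤) : S = Finset.univ := by
  by_contra hne
  obtain ⟨j, hj⟩ : ∃ j, j ∉ S := by
    by_contra h
    push_neg at h
    exact hne (Finset.eq_univ_iff_forall.2 h)
  have hle : Submodule.span ℝ (efun n '' ↑S)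
      ≤ LinearMap.ker (LinearMap.proj (R := ℝ) (φ := fun _ : Fin n => ℝ) j) := by
    rw [Submodule.span_le]
    rintro v ⟨b, hb, rfl⟩
    simp only [SetLike.mem_coe, LinearMap.mem_ker, LinearMap.proj_apply, efun]
    rw [Pi.single_apply, if_neg]
    intro h
    exact hj (h ▸ hb)
  have hmem : efun n j ∈ Submodule.span ℝ (efun n '' ↑S) := by
    rw [hS]; trivial
  have := hle hmem
  simp only [SetLike.mem_coe, LinearMap.mem_ker, LinearMap.proj_apply, efun] at this
  rw [Pi.single_apply, if_pos rfl] at this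
  exact one_ne_zero this

lemma Bmat_rank (n r : ℕ) (h2 : r < n) : (Bmat n r).rank = r := by
  have hdef : (Bmat n r).rank = Module.finrank ℝ (LinearMap.range (Bmat n r).mulVecLin) := rfl
  rw [hdef, Bmat_range n r h2]
  have him : efun n '' ↑(baseF n r h2) = Set.range (efun n ∘ Fin.castLE h2.le) := by
    rw [baseF, Finset.coe_image, Finset.coe_univ, Set.image_univ, Set.range_comp]
  rw [him]
  have hli : LinearIndependent ℝ (efun n ∘ Fin.castLE h2.le) := by
    have hb := (Pi.basisFun ℝ (Fin n)).linearIndependent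
    have he : ⇑(Pi.basisFun ℝ (Fin n)) = efun n := by
      funext j; rw [Pi.basisFun_apply]; rfl
    rw [he] at hb
    exact hb.comp _ (Fin.castLE_injective _)
  rw [finrank_span_eq_card hli, Fintype.card_fin]

end Stmt19Aux

namespace Stmt19Aux
open Finset Matrix

def stepW (n m r : ℕ) (h1 : 1 ≤ r) (h2 : r < n) (S : Finset (Fin n)) (i : Fin m) :
    Finset (Fin n) := S.image (gmf n m r h1 h2 i) ∪ baseF n r h2

lemma reach_eq' (n m r : ℕ) (h1 : 1 ≤ r) (h2 : r < n) (π : List (Fin m)) :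
    reach (Amat n m r h1 h2) (fun _ => Bmat n r) π
      = Submodule.span ℝ (efun n '' ↑(π.foldl (stepW n m r h1 h2) ∅)) :=
  reach_eq n m r h1 h2 π

lemma cf0_mem (n r : ℕ) (h1 : 1 ≤ r) (h2 : r < n) :
    cf n r h1 h2 0 ∈ baseF n r h2 := by
  rw [baseF, Finset.mem_image]
  refine ⟨⟨r - 1, by omega⟩, Finset.mem_univ _, ?_⟩
  apply Fin.ext
  simp only [cf, Fin.coe_castLE]
  omega

lemma base_val (n r : ℕ) (h2 : r < n) {b : Fin n} (hb : b ∈ baseF n r h2) : (b : ℕ) < r := by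
  rw [baseF, Finset.mem_image] at hb
  obtain ⟨j, _, rfl⟩ := hb
  exact j.isLt

lemma gm_base (n m r : ℕ) (h1 : 1 ≤ r) (h2 : r < n) (i : Fin m) {b : Fin n}
    (hb : (b : ℕ) < r) :
    gmf n m r h1 h2 i b = cf n r h1 h2 (sig m (n - r) ((i : ℕ) + 1) 0) := by
  rw [gmf, show (b : ℕ) + 1 - r = 0 by omega]

lemma gm_cf (n m r : ℕ) (h1 : 1 ≤ r) (h2 : r < n) (i : Fin m) {t : ℕ} (ht : t ≤ n - r) :
    gmf n m r h1 h2 i (cf n r h1 h2 t)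
      = cf n r h1 h2 (sig m (n - r) ((i : ℕ) + 1) t) := by
  have hval : ((cf n r h1 h2 t : Fin n) : ℕ) + 1 - r = t := by
    show r + min t (n - r) - 1 + 1 - r = t
    omega
  rw [gmf, hval]

lemma Wf_eq (n m r : ℕ) (h1 : 1 ≤ r) (h2 : r < n) (hm : 1 ≤ m) (hmN : m ≤ n - r) :
    ∀ π : List (Fin m), π ≠ [] →
      0 ∈ π.foldl (stepv m (n - r)) ∅ ∧
      π.foldl (stepW n m r h1 h2) ∅
        = baseF n r h2 ∪ (π.foldl (stepv m (n - r)) ∅).image (cf n r h1 h2) := by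
  intro π
  induction π using List.reverseRecOn with
  | nil => intro h; exact absurd rfl h
  | append_singleton π i ih =>
    intro _
    have hfoldV : (π ++ [i]).foldl (stepv m (n - r)) ∅
        = tauv m (n - r) ((i : ℕ) + 1) (π.foldl (stepv m (n - r)) ∅) := by
      rw [List.foldl_concat]; rfl
    have hfoldW : (π ++ [i]).foldl (stepW n m r h1 h2) ∅
        = (π.foldl (stepW n m r h1 h2) ∅).image (gmf n m r h1 h2 i) ∪ baseF n r h2 := by
      rw [List.foldl_concat]; rfl
    refine ⟨by rw [hfoldV]; exact Finset.mem_insert_self 0 _, ?_⟩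
    rcases eq_or_ne π [] with rfl | hne
    · simp only [List.nil_append] at hfoldV hfoldW ⊢
      simp only [List.foldl_nil] at hfoldV hfoldW
      rw [hfoldV, hfoldW]
      simp only [List.foldl_nil, Finset.image_empty, Finset.empty_union]
      rw [show tauv m (n - r) ((i : ℕ) + 1) ∅ = {0} by simp [tauv]]
      rw [show ({0} : Finset ℕ).image (cf n r h1 h2) = {cf n r h1 h2 0} by simp]
      exact (Finset.union_eq_left.2 (Finset.singleton_subset_iff.2 (cf0_mem n r h1 h2))).symm
    · obtain ⟨ih0, ihW⟩ := ih hne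
      rw [hfoldV, hfoldW, ihW]
      have hVN : ∀ t ∈ π.foldl (stepv m (n - r)) ∅, t ≤ n - r :=
        foldl_le_N hmN π ∅ (by simp)
      apply Finset.ext
      intro a
      simp only [tauv, Finset.mem_union, Finset.mem_image, Finset.mem_insert]
      constructor
      · rintro (⟨x, hx, rfl⟩ | ha)
        · rcases hx with hx | ⟨v, hv, rfl⟩
          · refine Or.inr ⟨sig m (n - r) ((i : ℕ) + 1) 0, Or.inr ⟨0, ih0, rfl⟩, ?_⟩
            exact (gm_base n m r h1 h2 i (base_val n r h2 hx)).symm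
          · refine Or.inr ⟨sig m (n - r) ((i : ℕ) + 1) v, Or.inr ⟨v, hv, rfl⟩, ?_⟩
            exact (gm_cf n m r h1 h2 i (hVN v hv)).symm
        · exact Or.inl ha
      · rintro (ha | ⟨w, hw | ⟨v, hv, rfl⟩, rfl⟩)
        · exact Or.inr ha
        · subst hw
          exact Or.inr (cf0_mem n r h1 h2)
        · exact Or.inl ⟨cf n r h1 h2 v, Or.inr ⟨v, hv, rfl⟩, gm_cf n m r h1 h2 i (hVN v hv)⟩

end Stmt19Aux

open Stmt19Aux in
/-- Degenerate case with rank constraint: for `r ≥ 1` and `1 ≤ m ≤ n - r` there is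
a controllable system (with possibly singular `A_i`) with rank-`r` matrices `B_i`
whose shortest controllable sequences have length exactly `m(2n - m - 2r + 1)/2 + 1`. -/
theorem stmt19 (n m r : ℕ) (hr : 1 ≤ r) (hm : 1 ≤ m) (hmn : m ≤ n - r) :
    ∃ (A : Fin m → Matrix (Fin n) (Fin n) ℝ) (B : Fin m → Matrix (Fin n) (Fin r) ℝ),
      (∀ i, (B i).rank = r) ∧
      (⋃ π : List (Fin m), (reach A B π : Set (Fin n → ℝ))) = Set.univ ∧
      (∃ π : List (Fin m), reach A B π = ⊤ ∧
        π.length = m * (2 * n - m - 2 * r + 1) / 2 + 1) ∧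
      (∀ π : List (Fin m), reach A B π = ⊤ →
        m * (2 * n - m - 2 * r + 1) / 2 + 1 ≤ π.length) := by
  classical
  have h2 : r < n := by
    rcases Nat.lt_or_ge r n with h | h
    · exact h
    · exfalso; omega
  set N := n - r with hNdef
  have hmN : m ≤ N := hmn
  have h1N : 1 ≤ N := le_trans hm hmN
  have hnrN : n = r + N := by omega
  -- arithmetic: the target length equals `Psi m (Icc 1 N)` and `(word m N).length`
  have harg : 2 * n - m - 2 * r + 1 = 2 * N - m + 1 := by omega
  obtain ⟨d, hd⟩ : ∃ d, N = m + d := ⟨N - m, by omega⟩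
  have hPI : Psi m (Finset.Icc 1 N) * 2 = 2 + m * (2 * N - m + 1) := by
    have := psi_Icc m d hm
    rw [← hd] at this
    exact this
  have hWL : (word m N).length * 2 = 2 + m * (2 * N - m + 1) := word_len hm hmN
  -- the word is a nonempty sequence
  have hword_ne : word m N ≠ [] := by
    intro h
    rw [h] at hWL
    simp at hWL
    omega
  refine ⟨Amat n m r hr h2, fun _ => Bmat n r, fun _ => Bmat_rank n r h2, ?_, ?_, ?_⟩
  · -- union = univ, using the controllable word
    have htop : reach (Amat n m r hr h2) (fun _ => Bmat n r) (word m N) = ⊤ := by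
      rw [reach_eq' n m r hr h2]
      have hWf := (Wf_eq n m r hr h2 hm hmN (word m N) hword_ne).2
      have hVfold : (word m N).foldl (stepv m N) ∅ = insert 0 (Finset.Icc 1 N) :=
        word_fold hm hmN
      rw [hNdef] at hVfold  -- align n - r vs N ; N is def n - r so should be fine
      rw [hWf, hVfold]
      have huniv : baseF n r h2 ∪ (insert 0 (Finset.Icc 1 (n - r))).image (cf n r hr h2)
          = Finset.univ := by
        apply Finset.eq_univ_iff_forall.2
        intro j
        rcases Nat.lt_or_ge (j : ℕ) r with hj | hj
        · apply Finset.mem_union_left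
          rw [baseF, Finset.mem_image]
          exact ⟨⟨(j : ℕ), hj⟩, Finset.mem_univ _, Fin.ext rfl⟩
        · apply Finset.mem_union_right
          rw [Finset.mem_image]
          refine ⟨(j : ℕ) + 1 - r, Finset.mem_insert_of_mem (Finset.mem_Icc.2 ⟨by omega, by omega⟩), ?_⟩
          apply Fin.ext
          show r + min ((j : ℕ) + 1 - r) (n - r) - 1 = (j : ℕ)
          omega
      rw [huniv]
      exact span_basis_univ n
    apply Set.eq_univ_of_univ_subset
    intro x _
    exact Set.mem_iUnion.2 ⟨word m N, by rw [htop]; trivial⟩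
  · -- existence of a controllable word of the right length
    refine ⟨word m N, ?_, ?_⟩
    · -- same as above
      rw [reach_eq' n m r hr h2]
      have hWf := (Wf_eq n m r hr h2 hm hmN (word m N) hword_ne).2
      have hVfold : (word m N).foldl (stepv m N) ∅ = insert 0 (Finset.Icc 1 N) :=
        word_fold hm hmN
      rw [hNdef] at hVfold
      rw [hWf, hVfold]
      have huniv : baseF n r h2 ∪ (insert 0 (Finset.Icc 1 (n - r))).image (cf n r hr h2)
          = Finset.univ := by
        apply Finset.eq_univ_iff_forall.2
        intro j
        rcases Nat.lt_or_ge (j : ℕ) r with hj | hj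
        · apply Finset.mem_union_left
          rw [baseF, Finset.mem_image]
          exact ⟨⟨(j : ℕ), hj⟩, Finset.mem_univ _, Fin.ext rfl⟩
        · apply Finset.mem_union_right
          rw [Finset.mem_image]
          refine ⟨(j : ℕ) + 1 - r, Finset.mem_insert_of_mem (Finset.mem_Icc.2 ⟨by omega, by omega⟩), ?_⟩
          apply Fin.ext
          show r + min ((j : ℕ) + 1 - r) (n - r) - 1 = (j : ℕ)
          omega
      rw [huniv]
      exact span_basis_univ n
    · rw [harg]
      omega
  · -- lower bound
    intro π hπ
    rcases eq_or_ne π [] with rfl | hne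
    · exfalso
      have h0 : reach (Amat n m r hr h2) (fun _ => Bmat n r) ([] : List (Fin m))
          = (⊥ : Submodule ℝ (Fin n → ℝ)) := rfl
      rw [h0] at hπ
      have hmem : efun n ⟨0, by omega⟩ ∈ (⊥ : Submodule ℝ (Fin n → ℝ)) := by
        rw [hπ]; trivial
      rw [Submodule.mem_bot] at hmem
      have := congrFun hmem ⟨0, by omega⟩
      rw [efun] at this
      simp [Pi.single_apply] at this
    · have hW : π.foldl (stepW n m r hr h2) ∅ = Finset.univ := by
        apply univ_of_span n
        rw [← reach_eq' n m r hr h2]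
        exact hπ
      obtain ⟨h0V, hWV⟩ := Wf_eq n m r hr h2 hm hmN π hne
      have hVsub : Finset.Icc 1 N ⊆ π.foldl (stepv m N) ∅ := by
        intro t ht
        have htIcc := Finset.mem_Icc.1 ht
        have hj : cf n r hr h2 t ∈ baseF n r h2 ∪ (π.foldl (stepv m (n - r)) ∅).image (cf n r hr h2) := by
          rw [← hWV, hW]
          exact Finset.mem_univ _
        rcases Finset.mem_union.1 hj with h | h
        · exfalso
          have := base_val n r h2 h
          have h3 : (cf n r hr h2 t : ℕ) = r + min t (n - r) - 1 := rfl
          omega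
        · obtain ⟨v, hv, hcfv⟩ := Finset.mem_image.1 h
          have hvN : v ≤ N := foldl_le_N hmN π ∅ (by simp) v hv
          have hval := congrArg Fin.val hcfv
          have h3 : (r + min v (n - r) - 1 : ℕ) = r + min t (n - r) - 1 := hval
          have : v = t := by omega
          exact this ▸ hv
      have hPsi1 : Psi m (Finset.Icc 1 N) ≤ Psi m (π.foldl (stepv m N) ∅) := psi_mono m hVsub
      have hPsi2 : Psi m (π.foldl (stepv m N) ∅) ≤ π.length := by
        have := psi_foldl hm hmN π ∅ (by simp)
        rw [psi_empty] at this
        omega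
      rw [harg]
      omega
end
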